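/- arXiv:1410.5062 — 5 statements merged into one kernel-verified Lean document; each statement's English description precedes it below -/
import Mathlib

section
/- Let t ≥ 1, let E_1,…,E_t be pairwise disjoint finite universes, and for each i let p_i ≤ k_i be natural numbers and let F_i be an (E_i,k_i,p_i)-good family of subsets of E_i. Let S be a finite family of subsets of E = E_1 ∪ … ∪ E_t such that |S ∩ E_i| = p_i for every S ∈ S and every i, and let w : S → ℝ. Then there exists a subfamily Ŝ ⊆ S with |Ŝ| ≤ |F_1|·|F_2|·…·|F_t| that max (k_1−p_1, k_2−p_2, …, k_t−p_t)-represents S. -/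
/-- A family `F` of subsets of `E'` is `(E', k', p')`-good if for every set `X ⊆ E'` with
`|X| = p'` and every set `Y ⊆ E' \ X` with `|Y| ≤ k' - p'`, there is `f ∈ F` such that
`X ⊆ f` and `Y ∩ f = ∅`. -/
def IsGoodFamily {U : Type*} [DecidableEq U] (E' : Finset U) (k' p' : ℕ)
    (F : Finset (Finset U)) : Prop :=
  ∀ X ⊆ E', X.card = p' → ∀ Y ⊆ E' \ X, Y.card ≤ k' - p' →
    ∃ f ∈ F, X ⊆ f ∧ f ∩ Y = ∅

theorem stmt0 {U : Type*} [DecidableEq U] (t : ℕ) (ht : 1 ≤ t)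
    (E : Fin t → Finset U) (hdisj : ∀ i j, i ≠ j → Disjoint (E i) (E j))
    (p k : Fin t → ℕ) (hpk : ∀ i, p i ≤ k i)
    (F : Fin t → Finset (Finset U))
    (hFsub : ∀ i, ∀ f ∈ F i, f ⊆ E i)
    (hFgood : ∀ i, IsGoodFamily (E i) (k i) (p i) (F i))
    (𝒮 : Finset (Finset U))
    (h𝒮 : ∀ S ∈ 𝒮, S ⊆ Finset.univ.biUnion E ∧ ∀ i, (S ∩ E i).card = p i)
    (w : Finset U → ℝ) :
    ∃ 𝒮' ⊆ 𝒮, 𝒮'.card ≤ ∏ i, (F i).card ∧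
      ∀ X ∈ 𝒮, ∀ Y ⊆ Finset.univ.biUnion E \ X,
        (∀ i, (Y ∩ E i).card ≤ k i - p i) →
        ∃ X' ∈ 𝒮', X' ∩ Y = ∅ ∧ w X ≤ w X' := by
  classical
  -- For each "signature" g (a choice of one set from each F i),
  -- T g is the family of S ∈ 𝒮 compatible with g.
  set T : (Fin t → Finset U) → Finset (Finset U) :=
    fun g => 𝒮.filter (fun S => ∀ i, S ∩ E i ⊆ g i) with hTdef
  have pickspec : ∀ g, (T g).Nonempty → ∃ S ∈ T g, ∀ S' ∈ T g, w S' ≤ w S := by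
    intro g h
    obtain ⟨b, hb, hmax⟩ := Finset.exists_max_image (T g) w h
    exact ⟨b, hb, hmax⟩
  set pick : (Fin t → Finset U) → Finset U :=
    fun g => if h : (T g).Nonempty then (pickspec g h).choose else ∅ with hpickdef
  have pick_mem : ∀ g (h : (T g).Nonempty), pick g ∈ T g := by
    intro g h
    simp only [hpickdef, dif_pos h]
    exact (pickspec g h).choose_spec.1
  have pick_max : ∀ g (h : (T g).Nonempty), ∀ S' ∈ T g, w S' ≤ w (pick g) := by
    intro g h
    simp only [hpickdef, dif_pos h]
    exact (pickspec g h).choose_spec.2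
  set G : Finset (Fin t → Finset U) :=
    (Fintype.piFinset F).filter (fun g => (T g).Nonempty) with hGdef
  refine ⟨G.image pick, ?_, ?_, ?_⟩
  · intro S hS
    obtain ⟨g, hg, rfl⟩ := Finset.mem_image.1 hS
    have hne : (T g).Nonempty := (Finset.mem_filter.1 hg).2
    exact (Finset.mem_filter.1 (pick_mem g hne)).1
  · calc (G.image pick).card ≤ G.card := Finset.card_image_le
      _ ≤ (Fintype.piFinset F).card := Finset.card_filter_le _ _
      _ = ∏ i, (F i).card := Fintype.card_piFinset F
  · intro X hX Y hY hYk
    have hXE := (h𝒮 X hX).2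
    have key : ∀ i, ∃ fi ∈ F i, (X ∩ E i) ⊆ fi ∧ fi ∩ (Y ∩ E i) = ∅ := by
      intro i
      refine hFgood i (X ∩ E i) Finset.inter_subset_right (hXE i) (Y ∩ E i) ?_ (hYk i)
      intro a ha
      have haY := (Finset.mem_inter.1 ha).1
      have haE := (Finset.mem_inter.1 ha).2
      have := Finset.mem_sdiff.1 (hY haY)
      refine Finset.mem_sdiff.2 ⟨haE, fun h => this.2 (Finset.mem_inter.1 h).1⟩
    choose f hf1 hf2 hf3 using key
    have hXT : X ∈ T f := Finset.mem_filter.2 ⟨hX, fun i => hf2 i⟩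
    have hne : (T f).Nonempty := ⟨X, hXT⟩
    have hfG : f ∈ G := Finset.mem_filter.2 ⟨Fintype.mem_piFinset.2 hf1, hne⟩
    refine ⟨pick f, Finset.mem_image.2 ⟨f, hfG, rfl⟩, ?_, pick_max f hne X hXT⟩
    have hpT := pick_mem f hne
    have hp𝒮 : pick f ∈ 𝒮 := (Finset.mem_filter.1 hpT).1
    have hpg : ∀ i, pick f ∩ E i ⊆ f i := (Finset.mem_filter.1 hpT).2
    apply Finset.eq_empty_iff_forall_notMem.2
    intro a ha
    obtain ⟨haX', haY⟩ := Finset.mem_inter.1 ha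
    obtain ⟨i, _, haE⟩ := Finset.mem_biUnion.1 ((h𝒮 _ hp𝒮).1 haX')
    have : a ∈ f i ∩ (Y ∩ E i) :=
      Finset.mem_inter.2 ⟨hpg i (Finset.mem_inter.2 ⟨haX', haE⟩),
        Finset.mem_inter.2 ⟨haY, haE⟩⟩
    rw [hf3 i] at this
    exact Finset.notMem_empty a this
end

section
/- Let G = (V,E) be a finite directed graph, r ∈ V a node such that G has an out-branching rooted at r, and k ≥ q ≥ 0 natural numbers. Suppose G has an out-tree T' rooted at r with exactly k−q internal nodes, and q pairwise node-disjoint directed paths on 2 nodes in G none of whose nodes belongs to T'. Then G has an out-branching rooted at r with at least k internal nodes. -/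
variable {V : Type*}

/-- The node set of a rooted set `A` of directed edges with root `r`: the root together
with all endpoints of edges of `A`. -/
def otNodes [DecidableEq V] (A : Finset (V × V)) (r : V) : Finset V :=
  insert r (A.image Prod.fst ∪ A.image Prod.snd)

/-- `A` is the edge set of an out-tree rooted at `r`: edges join distinct nodes, the root
has in-degree `0`, every other node has in-degree exactly `1`, and every node is
reachable from the root along directed edges.  (This is equivalent to: the underlying
undirected graph is a tree and `r` is the unique node of in-degree `0`.) -/
structure IsOutTree [DecidableEq V] (A : Finset (V × V)) (r : V) : Prop where
  ne : ∀ e ∈ A, e.1 ≠ e.2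
  root_no_in : ∀ e ∈ A, e.2 ≠ r
  in_unique : ∀ v ∈ otNodes A r, v ≠ r → (A.filter fun e => e.2 = v).card = 1
  reach : ∀ v ∈ otNodes A r, Relation.ReflTransGen (fun a b => (a, b) ∈ A) r v

/-- The number of internal nodes (nodes of out-degree at least `1`) of the out-tree with
edge set `A` and root `r`. -/
def internalCount [DecidableEq V] (A : Finset (V × V)) (r : V) : ℕ :=
  ((otNodes A r).filter fun v => (A.filter fun e => e.1 = v).Nonempty).card

/-- The number of leaves (nodes of out-degree `0`) of the out-tree with edge set `A`
and root `r`. -/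
def leafCount [DecidableEq V] (A : Finset (V × V)) (r : V) : ℕ :=
  ((otNodes A r).filter fun v => A.filter (fun e => e.1 = v) = ∅).card

/-- `A` is (the edge set of) an out-tree of the digraph `G` rooted at `r`. -/
def IsOutTreeOf [DecidableEq V] (G : V → V → Prop) (A : Finset (V × V)) (r : V) : Prop :=
  (∀ e ∈ A, G e.1 e.2) ∧ IsOutTree A r

/-- `A` is (the edge set of) an out-branching of `G` rooted at `r`: an out-tree of `G`
rooted at `r` whose node set is all of `V`. -/
def IsOutBranchingOf [DecidableEq V] [Fintype V] (G : V → V → Prop) (A : Finset (V × V))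
    (r : V) : Prop :=
  IsOutTreeOf G A r ∧ otNodes A r = Finset.univ

/-- The two nodes of a directed edge. -/
def pairNodes [DecidableEq V] (e : V × V) : Finset V := {e.1, e.2}

/-- `P` is a collection of pairwise node-disjoint directed paths on two nodes in `G`
(each such path being a directed edge of `G` with distinct endpoints). -/
def IsDisjointTwoPaths [DecidableEq V] (G : V → V → Prop) (P : Finset (V × V)) : Prop :=
  (∀ e ∈ P, G e.1 e.2 ∧ e.1 ≠ e.2) ∧
  ∀ e ∈ P, ∀ e' ∈ P, e ≠ e' → Disjoint (pairNodes e) (pairNodes e')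

section helpers
variable [DecidableEq V] {G : V → V → Prop} {r : V} {A : Finset (V × V)}

lemma mem_otNodes {x : V} : x ∈ otNodes A r ↔ x = r ∨ (∃ e ∈ A, e.1 = x) ∨ ∃ e ∈ A, e.2 = x := by
  simp [otNodes, Finset.mem_insert, Finset.mem_union, Finset.mem_image]

lemma root_mem_otNodes : r ∈ otNodes A r := by simp [otNodes]

lemma otNodes_insert (u v : V) :
    otNodes (insert (u, v) A) r = insert u (insert v (otNodes A r)) := by
  ext x
  simp only [mem_otNodes, Finset.mem_insert]
  aesop

lemma insertLeaf (hA : IsOutTreeOf G A r) {u v : V} (hG : G u v)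
    (hu : u ∈ otNodes A r) (hv : v ∉ otNodes A r) :
    IsOutTreeOf G (insert (u, v) A) r ∧
      otNodes (insert (u, v) A) r = insert v (otNodes A r) := by
  have hvr : v ≠ r := fun h => hv (h ▸ root_mem_otNodes)
  have huv : u ≠ v := fun h => hv (h ▸ hu)
  have hnodes : otNodes (insert (u, v) A) r = insert v (otNodes A r) := by
    rw [otNodes_insert, Finset.insert_comm, Finset.insert_eq_self.2 hu]
  refine ⟨⟨?_, ?_, ?_, ?_, ?_⟩, hnodes⟩
  · intro e he
    rcases Finset.mem_insert.1 he with rfl | he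
    · exact hG
    · exact hA.1 e he
  · intro e he
    rcases Finset.mem_insert.1 he with rfl | he
    · exact huv
    · exact hA.2.ne e he
  · intro e he
    rcases Finset.mem_insert.1 he with rfl | he
    · exact hvr
    · exact hA.2.root_no_in e he
  · intro x hx hxr
    rw [hnodes] at hx
    rcases Finset.mem_insert.1 hx with rfl | hx
    · have : A.filter (fun e => e.2 = x) = ∅ := by
        rw [Finset.filter_eq_empty_iff]
        rintro e he rfl
        exact hv (mem_otNodes.2 (Or.inr (Or.inr ⟨e, he, rfl⟩)))
      rw [Finset.filter_insert]
      simp [this]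
    · have hxv : x ≠ v := fun h => hv (h ▸ hx)
      rw [Finset.filter_insert, if_neg (by simpa using fun h : v = x => hxv h.symm)]
      exact hA.2.in_unique x hx hxr
  · intro x hx
    rw [hnodes] at hx
    have hmono : ∀ y, Relation.ReflTransGen (fun a b => (a, b) ∈ A) r y →
        Relation.ReflTransGen (fun a b => (a, b) ∈ insert (u, v) A) r y := fun y h =>
      Relation.ReflTransGen.mono (fun a b hab => Finset.mem_insert_of_mem hab) _ _ h
    rcases Finset.mem_insert.1 hx with rfl | hx
    · exact (hmono u (hA.2.reach u hu)).tail (Finset.mem_insert_self _ _)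
    · exact hmono x (hA.2.reach x hx)

end helpers

def chainEdges : V → List V → List (V × V)
  | _, [] => []
  | u, x :: l => (u, x) :: chainEdges x l

section seg
variable [DecidableEq V] {G : V → V → Prop} {r : V} {A : Finset (V × V)}

lemma chainEdges_fst : ∀ (l : List V) (w x a : V), (x = w ∨ x ∈ l) →
    ∃ y, (x, y) ∈ chainEdges w (l ++ [a])
  | [], w, x, a, hx => by
    rcases hx with rfl | hx
    · exact ⟨a, by simp [chainEdges]⟩
    · simp at hx
  | z :: t, w, x, a, hx => by
    rcases hx with rfl | hx
    · exact ⟨z, by simp [chainEdges]⟩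
    · obtain ⟨y, hy⟩ := chainEdges_fst t z x a (List.mem_cons.1 hx)
      exact ⟨y, by simp [chainEdges, hy]⟩

lemma addSegment : ∀ (l : List V) (A : Finset (V × V)) (w : V), IsOutTreeOf G A r →
    w ∈ otNodes A r → List.Chain G w l → (∀ x ∈ l, x ∉ otNodes A r) → l.Nodup →
    IsOutTreeOf G (A ∪ (chainEdges w l).toFinset) r ∧
      otNodes (A ∪ (chainEdges w l).toFinset) r = otNodes A r ∪ l.toFinset
  | [], A, w, hA, hw, _, _, _ => by simp [chainEdges, hA]
  | x :: t, A, w, hA, hw, hchain, hfresh, hnd => by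
    rw [List.Chain, List.chain_cons] at hchain
    obtain ⟨h1, h2⟩ := insertLeaf hA hchain.1 hw (hfresh x List.mem_cons_self)
    have hfresh' : ∀ y ∈ t, y ∉ otNodes (insert (w, x) A) r := by
      intro y hy
      rw [h2, Finset.mem_insert]
      rintro (rfl | hmem)
      · exact (List.nodup_cons.1 hnd).1 hy
      · exact hfresh y (List.mem_cons_of_mem _ hy) hmem
    obtain ⟨h3, h4⟩ := addSegment t (insert (w, x) A) x h1
      (by rw [h2]; exact Finset.mem_insert_self _ _) hchain.2 hfresh' (List.nodup_cons.1 hnd).2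
    have heq : A ∪ (chainEdges w (x :: t)).toFinset
        = insert (w, x) A ∪ (chainEdges x t).toFinset := by
      simp [chainEdges, Finset.union_comm, Finset.union_assoc, Finset.insert_eq, -Finset.union_singleton]
      ac_rfl
    rw [heq]
    refine ⟨h3, ?_⟩
    rw [h4, h2]
    ext y
    simp [or_comm, or_assoc, or_left_comm]

lemma segLemmaAux (C : Finset V) {a : V} (ha : a ∉ C) : ∀ (n : ℕ) (l : List V) (u : V),
    l.length ≤ n → u ∈ C → List.Chain G u (l ++ [a]) →
    ∃ w l', w ∈ C ∧ List.Chain G w (l' ++ [a]) ∧ (∀ x ∈ l', x ∉ C) ∧ (l' ++ [a]).Nodup := by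
  intro n
  induction n with
  | zero =>
    intro l u hlen hu hchain
    rw [Nat.le_zero, List.length_eq_zero_iff] at hlen
    subst hlen
    exact ⟨u, [], hu, hchain, by simp, by simp⟩
  | succ m ih =>
    intro l u hlen hu hchain
    by_cases hal : a ∈ l
    · obtain ⟨s, t, rfl⟩ := List.append_of_mem hal
      have hs : List.Chain G u (s ++ [a]) :=
        ((List.isChain_cons_split).1 (by simpa [List.Chain] using hchain)).1
      exact ih s u (by simp at hlen ⊢; omega) hu hs
    · by_cases hcl : ∃ y ∈ l, y ∈ C
      · obtain ⟨y, hyl, hyC⟩ := hcl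
        obtain ⟨s, t, rfl⟩ := List.append_of_mem hyl
        have ht : List.Chain G y (t ++ [a]) :=
          ((List.isChain_cons_split).1 (by simpa [List.Chain] using hchain)).2
        exact ih t y (by simp at hlen ⊢; omega) hyC ht
      · push_neg at hcl
        by_cases hnd : l.Nodup
        · exact ⟨u, l, hu, hchain, hcl, by simp [List.nodup_append, hnd, hal]; exact fun x hx h => hal (h ▸ hx)⟩
        · rw [List.nodup_iff_sublist] at hnd
          push_neg at hnd
          obtain ⟨x, hdup⟩ := hnd
          rw [List.cons_sublist_iff] at hdup
          obtain ⟨r₁, r₂, rfl, hx1, hx2⟩ := hdup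
          rw [List.singleton_sublist] at hx2
          obtain ⟨s, s', rfl⟩ := List.append_of_mem hx1
          obtain ⟨t₁, t₂, rfl⟩ := List.append_of_mem hx2
          have hc : List.Chain G u (s ++ x :: ((s' ++ t₁) ++ x :: (t₂ ++ [a]))) := by
            simpa using hchain
          have h1 := (List.isChain_cons_split).1 hc
          have h2 := ((List.isChain_cons_split).1 h1.2).2
          have hc' : List.Chain G u ((s ++ x :: t₂) ++ [a]) := by
            have : s ++ x :: t₂ ++ [a] = s ++ x :: (t₂ ++ [a]) := by simp
            rw [this]
            exact (List.isChain_cons_split).2 ⟨h1.1, h2⟩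
          exact ih (s ++ x :: t₂) u (by simp at hlen ⊢; omega) hu hc'

lemma segLemma (C : Finset V) {a : V} (ha : a ∉ C) (l : List V) (u : V)
    (hu : u ∈ C) (hchain : List.Chain G u (l ++ [a])) :
    ∃ w l', w ∈ C ∧ List.Chain G w (l' ++ [a]) ∧ (∀ x ∈ l', x ∉ C) ∧ (l' ++ [a]).Nodup :=
  segLemmaAux C ha l.length l u le_rfl hu hchain

end seg
section main
variable [DecidableEq V] {G : V → V → Prop} {r : V}

lemma mem_pairNodes {e : V × V} {v : V} : v ∈ pairNodes e ↔ v = e.1 ∨ v = e.2 := by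
  simp [pairNodes]

lemma chain_to_append {u a : V} (hne : u ≠ a) (h : Relation.ReflTransGen G u a) :
    ∃ l, List.Chain G u (l ++ [a]) := by
  obtain ⟨l, hc, hlast⟩ := List.exists_isChain_cons_of_relationReflTransGen h
  rcases List.eq_nil_or_concat' l with rfl | ⟨L, b, rfl⟩
  · exact absurd (by simpa using hlast) hne
  · have hb : b = a := by
      have h2 : (u :: (L ++ [b])).getLast (by simp) = b := by
        rw [List.getLast_cons (by simp)]
        exact List.getLast_concat
      rw [h2] at hlast
      exact hlast
    exact ⟨L, hb ▸ hc⟩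

lemma extendTree {A : Finset (V × V)} (hA : IsOutTreeOf G A r) {w z : V} {pfx : List V}
    (hw : w ∈ otNodes A r) (hch : List.Chain G w (pfx ++ [z]))
    (hfresh : ∀ x ∈ pfx ++ [z], x ∉ otNodes A r) (hnd : (pfx ++ [z]).Nodup) :
    ∃ A', A ⊆ A' ∧ IsOutTreeOf G A' r ∧
      otNodes A' r = otNodes A r ∪ (pfx ++ [z]).toFinset ∧
      ∀ x ∈ pfx, (A'.filter fun f => f.1 = x).Nonempty := by
  obtain ⟨h1, h2⟩ := addSegment (pfx ++ [z]) A w hA hw hch hfresh hnd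
  refine ⟨A ∪ (chainEdges w (pfx ++ [z])).toFinset, Finset.subset_union_left, h1, h2, ?_⟩
  intro x hx
  obtain ⟨y, hy⟩ := chainEdges_fst pfx w x z (Or.inr hx)
  exact ⟨(x, y), Finset.mem_filter.2 ⟨Finset.mem_union_right _ (List.mem_toFinset.2 hy), rfl⟩⟩

lemma mainLemma [Fintype V] (hreach : ∀ v : V, Relation.ReflTransGen G r v) :
    ∀ (n : ℕ) (A P : Finset (V × V)),
    (Finset.univ \ otNodes A r).card ≤ n → IsOutTreeOf G A r →
    (∀ e ∈ P, G e.1 e.2 ∧ e.1 ≠ e.2) →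
    (∀ e ∈ P, ∀ e' ∈ P, e ≠ e' → Disjoint (pairNodes e) (pairNodes e')) →
    (∀ e ∈ P, Disjoint (pairNodes e) (otNodes A r)) →
    ∃ B, A ⊆ B ∧ IsOutBranchingOf G B r ∧
      ∀ e ∈ P, ∃ v ∈ pairNodes e, (B.filter fun f => f.1 = v).Nonempty := by
  intro n
  induction n with
  | zero =>
    intro A P hcard hA hPG hPdisj hPA
    have huniv : otNodes A r = Finset.univ := by
      rw [Nat.le_zero, Finset.card_eq_zero, Finset.sdiff_eq_empty_iff_subset] at hcard
      exact le_antisymm (Finset.subset_univ _) hcard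
    refine ⟨A, le_refl _, ⟨hA, huniv⟩, fun e he => ?_⟩
    exact absurd (huniv ▸ Finset.mem_univ e.1)
      (Finset.disjoint_left.1 (hPA e he) (mem_pairNodes.2 (Or.inl rfl)))
  | succ m ih =>
    intro A P hcard hA hPG hPdisj hPA
    by_cases huniv : otNodes A r = Finset.univ
    · refine ⟨A, le_refl _, ⟨hA, huniv⟩, fun e he => ?_⟩
      exact absurd (huniv ▸ Finset.mem_univ e.1)
        (Finset.disjoint_left.1 (hPA e he) (mem_pairNodes.2 (Or.inl rfl)))
    · by_cases hPne : P.Nonempty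
      · obtain ⟨e₀, hmem₀⟩ := hPne
        have ha₀ : e₀.1 ∉ otNodes A r :=
          Finset.disjoint_left.1 (hPA e₀ hmem₀) (mem_pairNodes.2 (Or.inl rfl))
        have hb₀ : e₀.2 ∉ otNodes A r :=
          Finset.disjoint_left.1 (hPA e₀ hmem₀) (mem_pairNodes.2 (Or.inr rfl))
        have hab : e₀.1 ≠ e₀.2 := (hPG e₀ hmem₀).2
        obtain ⟨l0, hc0⟩ :=
          chain_to_append (fun h => ha₀ (by rw [← h]; exact root_mem_otNodes)) (hreach e₀.1)
        obtain ⟨w, l', hw, hch, hfresh, hnd⟩ :=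
          segLemma (otNodes A r) ha₀ l0 r root_mem_otNodes hc0
        obtain ⟨pfx, z, hch', hfresh', hnd', hzmem, hres, ha₀mem⟩ :
            ∃ (pfx : List V) (z : V), List.Chain G w (pfx ++ [z]) ∧
              (∀ x ∈ pfx ++ [z], x ∉ otNodes A r) ∧ (pfx ++ [z]).Nodup ∧
              z ∈ pairNodes e₀ ∧ (∃ v ∈ pairNodes e₀, v ∈ pfx) ∧ e₀.1 ∈ pfx ++ [z] := by
          by_cases hbl : e₀.2 ∈ l'
          · refine ⟨l', e₀.1, hch, ?_, hnd, mem_pairNodes.2 (Or.inl rfl),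
              ⟨e₀.2, mem_pairNodes.2 (Or.inr rfl), hbl⟩, by simp⟩
            intro x hx
            rcases List.mem_append.1 hx with hx | hx
            · exact hfresh x hx
            · rw [List.mem_singleton.1 hx]; exact ha₀
          · refine ⟨l' ++ [e₀.1], e₀.2, ?_, ?_, ?_, mem_pairNodes.2 (Or.inr rfl),
              ⟨e₀.1, mem_pairNodes.2 (Or.inl rfl), by simp⟩, by simp⟩
            · have : List.Chain G w (l' ++ e₀.1 :: [e₀.2]) :=
                (List.isChain_cons_split).2 ⟨hch, List.isChain_pair.2 (hPG e₀ hmem₀).1⟩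
              simpa using this
            · intro x hx
              rcases (by simpa using hx : x ∈ l' ∨ x = e₀.1 ∨ x = e₀.2) with hx | hx | hx
              · exact hfresh x hx
              · rw [hx]; exact ha₀
              · rw [hx]; exact hb₀
            · have h1 : e₀.2 ∉ l' ++ [e₀.1] := by
                simp only [List.mem_append, List.mem_singleton]
                rintro (h | h)
                · exact hbl h
                · exact hab h.symm
              have := List.Nodup.append hnd (List.nodup_singleton e₀.2) ?_
              · simpa using this
              · intro x hx hx2
                simp only [List.mem_singleton] at hx2
                rw [hx2] at hx
                exact h1 hx
        obtain ⟨A', hAA', hA', hN', hint⟩ := extendTree hA hw hch' hfresh' hnd'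
        have hgrow : otNodes A r ⊆ otNodes A' r := by
          rw [hN']; exact Finset.subset_union_left
        have ha₀N' : e₀.1 ∈ otNodes A' r := by
          rw [hN']
          exact Finset.mem_union_right _ (List.mem_toFinset.2 ha₀mem)
        have hmeas : (Finset.univ \ otNodes A' r).card ≤ m := by
          have hlt : (Finset.univ \ otNodes A' r).card
              < (Finset.univ \ otNodes A r).card := by
            apply Finset.card_lt_card
            rw [Finset.ssubset_iff_of_subset
              (Finset.sdiff_subset_sdiff (Finset.Subset.refl _) hgrow)]
            exact ⟨e₀.1, Finset.mem_sdiff.2 ⟨Finset.mem_univ _, ha₀⟩,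
              by simp [Finset.mem_sdiff, ha₀N']⟩
          omega
        set P' := P.filter (fun e => e.1 ∉ otNodes A' r ∧ e.2 ∉ otNodes A' r) with hP'def
        have hP'sub : P' ⊆ P := Finset.filter_subset _ P
        obtain ⟨B, hA'B, hBbr, hBP⟩ := ih A' P' hmeas hA'
          (fun e he => hPG e (hP'sub he))
          (fun e he e' he' => hPdisj e (hP'sub he) e' (hP'sub he'))
          (fun e he => by
            obtain ⟨-, h1, h2⟩ := Finset.mem_filter.1 he
            rw [Finset.disjoint_left]
            intro v hv
            rcases mem_pairNodes.1 hv with rfl | rfl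
            · exact h1
            · exact h2)
        have hup : ∀ v, (A'.filter fun f => f.1 = v).Nonempty →
            (B.filter fun f => f.1 = v).Nonempty := fun v ⟨f, hf⟩ =>
          ⟨f, Finset.mem_filter.2 ⟨hA'B (Finset.mem_filter.1 hf).1,
            (Finset.mem_filter.1 hf).2⟩⟩
        refine ⟨B, hAA'.trans hA'B, hBbr, ?_⟩
        intro e he
        by_cases heP' : e ∈ P'
        · exact hBP e heP'
        · by_cases hee₀ : e = e₀
          · subst hee₀
            obtain ⟨v, hv1, hv2⟩ := hres
            exact ⟨v, hv1, hup v (hint v hv2)⟩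
          · have hmemN : e.1 ∈ otNodes A' r ∨ e.2 ∈ otNodes A' r := by
              rw [hP'def] at heP'
              simp only [Finset.mem_filter, he, true_and] at heP'
              tauto
            obtain ⟨v, hvpair⟩ : ∃ v, v ∈ pairNodes e ∧ v ∈ otNodes A' r := by
              rcases hmemN with h | h
              · exact ⟨e.1, mem_pairNodes.2 (Or.inl rfl), h⟩
              · exact ⟨e.2, mem_pairNodes.2 (Or.inr rfl), h⟩
            obtain ⟨hvpair, hvN'⟩ := hvpair
            have hvfresh : v ∉ otNodes A r := Finset.disjoint_left.1 (hPA e he) hvpair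
            have hvseg : v ∈ pfx ++ [z] := by
              rw [hN'] at hvN'
              rcases Finset.mem_union.1 hvN' with h | h
              · exact absurd h hvfresh
              · exact List.mem_toFinset.1 h
            have hvz : v ≠ z := fun h =>
              Finset.disjoint_left.1 (hPdisj e he e₀ hmem₀ hee₀) hvpair (h ▸ hzmem)
            have hvpfx : v ∈ pfx := by
              rcases List.mem_append.1 hvseg with h | h
              · exact h
              · exact absurd (List.mem_singleton.1 h) hvz
            exact ⟨v, hvpair, hup v (hint v hvpfx)⟩
      · rw [Finset.not_nonempty_iff_eq_empty] at hPne
        subst hPne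
        obtain ⟨a, haA⟩ : ∃ a, a ∉ otNodes A r := by
          by_contra h
          push_neg at h
          exact huniv (Finset.eq_univ_iff_forall.2 h)
        obtain ⟨l0, hc0⟩ :=
          chain_to_append (fun h => haA (by rw [← h]; exact root_mem_otNodes)) (hreach a)
        obtain ⟨w, l', hw, hch, hfresh, hnd⟩ :=
          segLemma (otNodes A r) haA l0 r root_mem_otNodes hc0
        have hfresh' : ∀ x ∈ l' ++ [a], x ∉ otNodes A r := by
          intro x hx
          rcases List.mem_append.1 hx with hx | hx
          · exact hfresh x hx
          · rw [List.mem_singleton.1 hx]; exact haA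
        obtain ⟨A', hAA', hA', hN', -⟩ := extendTree hA hw hch hfresh' hnd
        have hgrow : otNodes A r ⊆ otNodes A' r := by
          rw [hN']; exact Finset.subset_union_left
        have haN' : a ∈ otNodes A' r := by
          rw [hN']
          exact Finset.mem_union_right _ (List.mem_toFinset.2 (by simp))
        have hmeas : (Finset.univ \ otNodes A' r).card ≤ m := by
          have hlt : (Finset.univ \ otNodes A' r).card
              < (Finset.univ \ otNodes A r).card := by
            apply Finset.card_lt_card
            rw [Finset.ssubset_iff_of_subset
              (Finset.sdiff_subset_sdiff (Finset.Subset.refl _) hgrow)]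
            exact ⟨a, Finset.mem_sdiff.2 ⟨Finset.mem_univ _, haA⟩,
              by simp [Finset.mem_sdiff, haN']⟩
          omega
        obtain ⟨B, hA'B, hBbr, -⟩ := ih A' ∅ hmeas hA' (by simp) (by simp) (by simp)
        exact ⟨B, hAA'.trans hA'B, hBbr, by simp⟩

end main

theorem stmt3 [DecidableEq V] [Fintype V] (G : V → V → Prop) (r : V) (k q : ℕ) (hqk : q ≤ k)
    (hbr : ∃ B : Finset (V × V), IsOutBranchingOf G B r)
    (T : Finset (V × V)) (hT : IsOutTreeOf G T r) (hTint : internalCount T r = k - q)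
    (P : Finset (V × V)) (hPcard : P.card = q) (hP : IsDisjointTwoPaths G P)
    (hPT : ∀ e ∈ P, Disjoint (pairNodes e) (otNodes T r)) :
    ∃ B : Finset (V × V), IsOutBranchingOf G B r ∧ k ≤ internalCount B r := by
  classical
  obtain ⟨B₀, hB₀⟩ := hbr
  have hreach : ∀ v : V, Relation.ReflTransGen G r v := by
    intro v
    have hv : v ∈ otNodes B₀ r := hB₀.2 ▸ Finset.mem_univ v
    exact Relation.ReflTransGen.mono (fun a b hab => hB₀.1.1 (a, b) hab) _ _ (hB₀.1.2.reach v hv)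
  obtain ⟨B, hTB, hBbr, hBP⟩ :=
    mainLemma hreach (Finset.univ \ otNodes T r).card T P le_rfl hT hP.1 hP.2 hPT
  refine ⟨B, hBbr, ?_⟩
  set f : V × V → V := fun e =>
    if h : ∃ v, v ∈ pairNodes e ∧ (B.filter fun f => f.1 = v).Nonempty then h.choose
    else e.1 with hf
  have hfspec : ∀ e ∈ P, f e ∈ pairNodes e ∧ (B.filter fun g => g.1 = f e).Nonempty := by
    intro e he
    obtain ⟨v, hv1, hv2⟩ := hBP e he
    have hh : ∃ v, v ∈ pairNodes e ∧ (B.filter fun f => f.1 = v).Nonempty := ⟨v, hv1, hv2⟩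
    rw [hf]
    dsimp only
    simp only [dif_pos hh]
    exact hh.choose_spec
  set IT := (otNodes T r).filter (fun v => (T.filter fun e => e.1 = v).Nonempty) with hIT
  set IB := (otNodes B r).filter (fun v => (B.filter fun e => e.1 = v).Nonempty) with hIB
  have hsub : IT ∪ P.image f ⊆ IB := by
    intro v hv
    rcases Finset.mem_union.1 hv with hv | hv
    · obtain ⟨hv1, hv2⟩ := Finset.mem_filter.1 hv
      refine Finset.mem_filter.2 ⟨hBbr.2 ▸ Finset.mem_univ v, ?_⟩
      obtain ⟨e, he⟩ := hv2
      exact ⟨e, Finset.mem_filter.2 ⟨hTB (Finset.mem_filter.1 he).1,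
        (Finset.mem_filter.1 he).2⟩⟩
    · obtain ⟨e, he, rfl⟩ := Finset.mem_image.1 hv
      exact Finset.mem_filter.2 ⟨hBbr.2 ▸ Finset.mem_univ _, (hfspec e he).2⟩
  have hdisj : Disjoint IT (P.image f) := by
    rw [Finset.disjoint_left]
    intro v hv hv2
    obtain ⟨e, he, rfl⟩ := Finset.mem_image.1 hv2
    exact Finset.disjoint_left.1 (hPT e he) (hfspec e he).1 (Finset.mem_filter.1 hv).1
  have hinj : (P.image f).card = q := by
    rw [← hPcard]
    apply Finset.card_image_of_injOn
    intro e he e' he' hee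
    by_contra hne
    exact Finset.disjoint_left.1 (hP.2 e he e' he' hne) (hfspec e he).1
      (hee ▸ (hfspec e' he').1)
  have hITcard : IT.card = k - q := hTint
  have hcard : (IT ∪ P.image f).card = k := by
    rw [Finset.card_union_of_disjoint hdisj, hinj, hITcard]
    omega
  have : internalCount B r = IB.card := rfl
  rw [this, ← hcard]
  exact Finset.card_le_card hsub
end

section
/- Let G be a finite directed graph, r a node of G, and k ≥ 1. Suppose G has at least one out-tree rooted at r with exactly k internal nodes, and let T be such an out-tree having the minimal number of leaves among all out-trees of G rooted at r with exactly k internal nodes. Then T contains no leaf whose father has another child; that is, for every leaf u of T, the unique in-neighbor of u in T has out-degree exactly 1 in T. -/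
variable {V : Type*}

theorem stmt5 [DecidableEq V] (G : V → V → Prop) (r : V) (k : ℕ) (hk : 1 ≤ k)
    (T : Finset (V × V)) (hT : IsOutTreeOf G T r) (hTint : internalCount T r = k)
    (hmin : ∀ T' : Finset (V × V), IsOutTreeOf G T' r → internalCount T' r = k →
      leafCount T r ≤ leafCount T' r) :
    ∀ u ∈ otNodes T r, T.filter (fun e => e.1 = u) = ∅ →
      ∀ e ∈ T, e.2 = u → (T.filter fun e' => e'.1 = e.1).card = 1 := by
  intro u hu hleaf e he heu
  obtain ⟨hTG, hTT⟩ := hT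
  by_contra hcard
  have hur : u ≠ r := heu ▸ hTT.root_no_in e he
  -- the only edge into u is e
  have hsnd : T.filter (fun e' => e'.2 = u) = {e} := by
    obtain ⟨a, ha⟩ := Finset.card_eq_one.mp (hTT.in_unique u hu hur)
    have hme : e ∈ T.filter (fun e' => e'.2 = u) := Finset.mem_filter.mpr ⟨he, heu⟩
    rw [ha] at hme ⊢
    rw [Finset.mem_singleton.mp hme]
  have husnd : ∀ x ∈ T, x.2 = u → x = e := by
    intro x hx hxu
    have : x ∈ T.filter (fun e' => e'.2 = u) := Finset.mem_filter.mpr ⟨hx, hxu⟩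
    rw [hsnd] at this; exact Finset.mem_singleton.mp this
  have hufst : ∀ x ∈ T, x.1 ≠ u := by
    intro x hx hxu
    have : x ∈ T.filter (fun e' => e'.1 = u) := Finset.mem_filter.mpr ⟨hx, hxu⟩
    rw [hleaf] at this; exact absurd this (Finset.notMem_empty x)
  have hef : e ∈ T.filter (fun e' => e'.1 = e.1) := Finset.mem_filter.mpr ⟨he, rfl⟩
  have h2 : 1 < (T.filter (fun e' => e'.1 = e.1)).card := by
    have h1 : 0 < (T.filter (fun e' => e'.1 = e.1)).card := Finset.card_pos.mpr ⟨e, hef⟩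
    omega
  obtain ⟨e', he'f, he'e⟩ := Finset.exists_mem_ne h2 e
  obtain ⟨he'T, he'1⟩ := Finset.mem_filter.mp he'f
  -- membership in otNodes
  have hmemN : ∀ (A : Finset (V × V)) (v : V), v ∈ otNodes A r ↔
      v = r ∨ (∃ x ∈ A, x.1 = v) ∨ (∃ x ∈ A, x.2 = v) := by
    intro A v
    simp [otNodes, Finset.mem_insert, Finset.mem_union, Finset.mem_image]
  -- node set of T.erase e
  have hnodes : otNodes (T.erase e) r = (otNodes T r).erase u := by
    ext v
    rw [Finset.mem_erase, hmemN, hmemN]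
    constructor
    · rintro (rfl | ⟨x, hx, hxv⟩ | ⟨x, hx, hxv⟩)
      · exact ⟨hur.symm, Or.inl rfl⟩
      · have hxT := Finset.mem_of_mem_erase hx
        exact ⟨hxv ▸ hufst x hxT, Or.inr (Or.inl ⟨x, hxT, hxv⟩)⟩
      · have hxT := Finset.mem_of_mem_erase hx
        refine ⟨?_, Or.inr (Or.inr ⟨x, hxT, hxv⟩)⟩
        intro hvu
        exact (Finset.mem_erase.mp hx).1 (husnd x hxT (hxv.trans hvu))
    · rintro ⟨hvu, rfl | ⟨x, hx, hxv⟩ | ⟨x, hx, hxv⟩⟩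
      · exact Or.inl rfl
      · by_cases hxe : x = e
        · exact Or.inr (Or.inl ⟨e', Finset.mem_erase.mpr ⟨he'e, he'T⟩,
            he'1.trans (hxe ▸ hxv)⟩)
        · exact Or.inr (Or.inl ⟨x, Finset.mem_erase.mpr ⟨hxe, hx⟩, hxv⟩)
      · have hxe : x ≠ e := by
          intro h
          apply hvu
          rw [← hxv, h, heu]
        exact Or.inr (Or.inr ⟨x, Finset.mem_erase.mpr ⟨hxe, hx⟩, hxv⟩)
  -- the erased set is an out-tree of G
  have hT'G : ∀ x ∈ T.erase e, G x.1 x.2 := fun x hx => hTG x (Finset.mem_of_mem_erase hx)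
  have hT'T : IsOutTree (T.erase e) r := by
    constructor
    · exact fun x hx => hTT.ne x (Finset.mem_of_mem_erase hx)
    · exact fun x hx => hTT.root_no_in x (Finset.mem_of_mem_erase hx)
    · intro v hv hvr
      rw [hnodes, Finset.mem_erase] at hv
      have hfe : (T.erase e).filter (fun x => x.2 = v) = (T.filter (fun x => x.2 = v)).erase e :=
        Finset.filter_erase _ _ _
      rw [hfe, Finset.erase_eq_of_notMem, hTT.in_unique v hv.2 hvr]
      intro hmem
      exact hv.1 (by rw [← (Finset.mem_filter.mp hmem).2]; exact heu)
    · intro v hv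
      rw [hnodes, Finset.mem_erase] at hv
      have key : ∀ w, Relation.ReflTransGen (fun a b => (a, b) ∈ T) r w → w ≠ u →
          Relation.ReflTransGen (fun a b => (a, b) ∈ T.erase e) r w := by
        intro w hw
        induction hw with
        | refl => intro _; exact Relation.ReflTransGen.refl
        | @tail b c hrb hbc ih =>
          intro hcu
          have hbu : b ≠ u := hufst (b, c) hbc
          have hbce : (b, c) ≠ e := by
            intro h
            exact hcu (show (b, c).2 = u from h ▸ heu)
          exact (ih hbu).tail (Finset.mem_erase.mpr ⟨hbce, hbc⟩)
      exact key v (hTT.reach v hv.2) hv.1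
  -- internal count is preserved
  have hint : internalCount (T.erase e) r = k := by
    rw [← hTint]
    unfold internalCount
    congr 1
    ext v
    rw [hnodes]
    simp only [Finset.mem_filter, Finset.mem_erase]
    constructor
    · rintro ⟨⟨hvu, hv⟩, x, hx⟩
      obtain ⟨hxm, hx1⟩ := Finset.mem_filter.mp hx
      exact ⟨hv, x, Finset.mem_filter.mpr ⟨Finset.mem_of_mem_erase hxm, hx1⟩⟩
    · rintro ⟨hv, x, hx⟩
      obtain ⟨hxT, hxv⟩ := Finset.mem_filter.mp hx
      have hvu : v ≠ u := fun h => hufst x hxT (hxv.trans h)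
      refine ⟨⟨hvu, hv⟩, ?_⟩
      by_cases hxe : x = e
      · exact ⟨e', Finset.mem_filter.mpr ⟨Finset.mem_erase.mpr ⟨he'e, he'T⟩,
          he'1.trans (hxe ▸ hxv)⟩⟩
      · exact ⟨x, Finset.mem_filter.mpr ⟨Finset.mem_erase.mpr ⟨hxe, hxT⟩, hxv⟩⟩
  -- leaf count decreases
  have hleafset : ((otNodes (T.erase e) r).filter fun v => (T.erase e).filter (fun x => x.1 = v) = ∅)
      = ((otNodes T r).filter fun v => T.filter (fun x => x.1 = v) = ∅).erase u := by
    ext v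
    rw [hnodes, Finset.mem_erase]
    simp only [Finset.mem_filter, Finset.mem_erase]
    constructor
    · rintro ⟨⟨hvu, hv⟩, hemp⟩
      refine ⟨hvu, hv, ?_⟩
      rw [Finset.eq_empty_iff_forall_notMem]
      intro x hx
      obtain ⟨hxT, hxv⟩ := Finset.mem_filter.mp hx
      by_cases hxe : x = e
      · have : e' ∈ (T.erase e).filter (fun x => x.1 = v) :=
          Finset.mem_filter.mpr ⟨Finset.mem_erase.mpr ⟨he'e, he'T⟩, he'1.trans (hxe ▸ hxv)⟩
        rw [hemp] at this
        exact absurd this (Finset.notMem_empty e')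
      · have : x ∈ (T.erase e).filter (fun x => x.1 = v) :=
          Finset.mem_filter.mpr ⟨Finset.mem_erase.mpr ⟨hxe, hxT⟩, hxv⟩
        rw [hemp] at this
        exact absurd this (Finset.notMem_empty x)
    · rintro ⟨hvu, hv, hemp⟩
      refine ⟨⟨hvu, hv⟩, ?_⟩
      rw [Finset.eq_empty_iff_forall_notMem]
      intro x hx
      obtain ⟨hxm, hxv⟩ := Finset.mem_filter.mp hx
      have : x ∈ T.filter (fun x => x.1 = v) :=
        Finset.mem_filter.mpr ⟨Finset.mem_of_mem_erase hxm, hxv⟩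
      rw [hemp] at this
      exact absurd this (Finset.notMem_empty x)
  have humem : u ∈ (otNodes T r).filter fun v => T.filter (fun x => x.1 = v) = ∅ :=
    Finset.mem_filter.mpr ⟨hu, hleaf⟩
  have hlt : leafCount (T.erase e) r < leafCount T r := by
    unfold leafCount
    rw [hleafset]
    exact Finset.card_erase_lt_of_mem humem
  exact absurd (hmin (T.erase e) ⟨hT'G, hT'T⟩ hint) (not_le.mpr hlt)
end

section
/- Let T be an out-tree in which every leaf is at distance at least 2 from the root, and such that for every leaf both its father and its grandfather have out-degree exactly 1 in T. Then the number of leaves of T is at most half the number of internal nodes of T (i.e., 2·(number of leaves) ≤ number of internal nodes). -/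
variable {V : Type*}

theorem stmt7 [DecidableEq V] (A : Finset (V × V)) (r : V) (hA : IsOutTree A r)
    (h : ∀ u ∈ otNodes A r, A.filter (fun e => e.1 = u) = ∅ →
      u ≠ r ∧ ∀ e ∈ A, e.2 = u →
        e.1 ≠ r ∧ (A.filter fun e' => e'.1 = e.1).card = 1 ∧
        ∀ e' ∈ A, e'.2 = e.1 → (A.filter fun e'' => e''.1 = e'.1).card = 1) :
    2 * leafCount A r ≤ internalCount A r := by
  classical
  -- uniqueness of out-edges when out-degree is 1
  have outuniq : ∀ p x y, (A.filter fun e => e.1 = p).card = 1 →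
      (p, x) ∈ A → (p, y) ∈ A → x = y := by
    intro p x y hc hx hy
    have h1 : ((p,x) : V×V) ∈ A.filter fun e => e.1 = p := by
      simp [Finset.mem_filter, hx]
    have h2 : ((p,y) : V×V) ∈ A.filter fun e => e.1 = p := by
      simp [Finset.mem_filter, hy]
    have := Finset.card_le_one.mp (le_of_eq hc) _ h1 _ h2
    exact congrArg Prod.snd this
  have mem_nodes_fst : ∀ e ∈ A, e.1 ∈ otNodes A r := by
    intro e he
    simp only [otNodes, Finset.mem_insert, Finset.mem_union, Finset.mem_image]
    exact Or.inr (Or.inl ⟨e, he, rfl⟩)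
  have exedge : ∀ u, ∃ e : V × V, u ∈ otNodes A r → u ≠ r → e ∈ A ∧ e.2 = u := by
    intro u
    by_cases hu : u ∈ otNodes A r ∧ u ≠ r
    · have hc := hA.in_unique u hu.1 hu.2
      have hne : (A.filter fun e => e.2 = u).Nonempty := Finset.card_pos.mp (by omega)
      obtain ⟨e, he⟩ := hne
      simp only [Finset.mem_filter] at he
      exact ⟨e, fun _ _ => he⟩
    · exact ⟨(r,r), fun h1 h2 => absurd ⟨h1,h2⟩ hu⟩
  choose fe hfe using exedge
  set L := (otNodes A r).filter (fun v => A.filter (fun e => e.1 = v) = ∅) with hLdef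
  -- facts about leaves
  have leaf_facts : ∀ u ∈ L,
      ((fe u).1, u) ∈ A ∧ (fe u).1 ≠ r ∧ (fe u).1 ∈ otNodes A r ∧
      (A.filter fun e' => e'.1 = (fe u).1).card = 1 ∧
      ((fe (fe u).1).1, (fe u).1) ∈ A ∧
      (A.filter fun e'' => e''.1 = (fe (fe u).1).1).card = 1 ∧
      (fe (fe u).1).1 ∈ otNodes A r := by
    intro u hu
    simp only [hLdef, Finset.mem_filter] at hu
    obtain ⟨hun, hul⟩ := hu
    obtain ⟨hur, hP⟩ := h u hun hul
    obtain ⟨heA, hes⟩ := hfe u hun hur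
    obtain ⟨hfr, hfd, hgd⟩ := hP (fe u) heA hes
    have hedge : ((fe u).1, u) ∈ A := by
      have h2 : ((fe u).1, (fe u).2) ∈ A := by simpa using heA
      rwa [hes] at h2
    have hfn : (fe u).1 ∈ otNodes A r := mem_nodes_fst _ heA
    obtain ⟨heA2, hes2⟩ := hfe (fe u).1 hfn hfr
    have hedge2 : ((fe (fe u).1).1, (fe u).1) ∈ A := by
      have h2 : ((fe (fe u).1).1, (fe (fe u).1).2) ∈ A := by simpa using heA2
      rwa [hes2] at h2
    have hgd1 := hgd (fe (fe u).1) heA2 hes2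
    exact ⟨hedge, hfr, hfn, hfd, hedge2, hgd1, mem_nodes_fst _ heA2⟩
  have leaf_no_out : ∀ u ∈ L, A.filter (fun e => e.1 = u) = ∅ := by
    intro u hu
    simp only [hLdef, Finset.mem_filter] at hu
    exact hu.2
  -- father injective on leaves
  have fa_inj : ∀ u ∈ L, ∀ u' ∈ L, (fe u).1 = (fe u').1 → u = u' := by
    intro u hu u' hu' heq
    obtain ⟨he, _, _, hfd, _⟩ := leaf_facts u hu
    obtain ⟨he', _⟩ := leaf_facts u' hu'
    rw [← heq] at he'
    exact outuniq _ _ _ hfd he he'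
  -- father of a leaf is never a grandfather of a leaf
  have fa_ne_ga : ∀ u ∈ L, ∀ u' ∈ L, (fe u).1 ≠ (fe (fe u').1).1 := by
    intro u hu u' hu' heq
    obtain ⟨he, _, _, hfd, _⟩ := leaf_facts u hu
    obtain ⟨he', _, _, _, hge', _⟩ := leaf_facts u' hu'
    rw [← heq] at hge'
    have hu_eq : u = (fe u').1 := outuniq _ _ _ hfd he hge'
    have : ((fe u').1, u') ∈ A.filter (fun e => e.1 = u) := by
      simp [Finset.mem_filter, he', hu_eq]
    rw [leaf_no_out u hu] at this
    exact absurd this (Finset.notMem_empty _)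
  -- the injection
  have key : (L ×ˢ (Finset.univ : Finset Bool)).card ≤ internalCount A r := by
    apply Finset.card_le_card_of_injOn
      (fun p => if p.2 then (fe (fe p.1).1).1 else (fe p.1).1)
    · rintro ⟨u, b⟩ hp
      simp only [Finset.mem_coe, Finset.mem_product] at hp
      obtain ⟨he, _, hfn, hfd, hge, hgd, hgn⟩ := leaf_facts u hp.1
      simp only [internalCount, Finset.mem_coe, Finset.mem_filter]
      cases b with
      | false =>
        refine ⟨hfn, ?_⟩
        exact ⟨((fe u).1, u), by simp [Finset.mem_filter, he]⟩
      | true =>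
        refine ⟨hgn, ?_⟩
        exact ⟨((fe (fe u).1).1, (fe u).1), by simp [Finset.mem_filter, hge]⟩
    · rintro ⟨u, b⟩ hp ⟨u', b'⟩ hp' heq
      simp only [Finset.mem_coe, Finset.mem_product] at hp hp'
      have hu := hp.1; have hu' := hp'.1
      cases b <;> cases b' <;> simp only [if_true, if_false, Bool.false_eq_true,
        ite_true, ite_false] at heq
      · exact by rw [fa_inj u hu u' hu' heq]
      · exact absurd heq (fa_ne_ga u hu u' hu')
      · exact absurd heq.symm (fa_ne_ga u' hu' u hu)
      · -- grandfathers equal: first fathers equal, then leaves equal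
        obtain ⟨_, _, _, _, hge, hgd, _⟩ := leaf_facts u hu
        obtain ⟨_, _, _, _, hge', _⟩ := leaf_facts u' hu'
        rw [← heq] at hge'
        have hff : (fe u).1 = (fe u').1 := outuniq _ _ _ hgd hge hge'
        rw [fa_inj u hu u' hu' hff]
  have hcard : (L ×ˢ (Finset.univ : Finset Bool)).card = 2 * leafCount A r := by
    rw [Finset.card_product]
    simp [leafCount, hLdef, mul_comm]
  omega
end

section
/- Let G be a finite undirected graph and k ≥ 1, and suppose G has a k-packing. Then for every (k−1)-packing S_1 = (V_1,E_1), …, S_{k−1} = (V_{k−1},E_{k−1}) in G, G has a k-packing whose paths contain at least ⌈2.5(k−1)⌉ (i.e., ⌈5(k−1)/2⌉) nodes from V_1 ∪ … ∪ V_{k−1}. -/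
variable {V : Type*}

/-- The node set of a triple of vertices. -/
def tripleNodes [DecidableEq V] (p : V × V × V) : Finset V := {p.1, p.2.1, p.2.2}

/-- `P` is a `t`-packing of the undirected graph `G`: `t` pairwise node-disjoint simple
paths, each on exactly `3` nodes (the `i`-th path visiting the three distinct nodes of the
triple `P i` in order). -/
def IsP2Packing [DecidableEq V] (G : SimpleGraph V) (t : ℕ) (P : Fin t → V × V × V) : Prop :=
  (∀ i, (tripleNodes (P i)).card = 3 ∧
    G.Adj (P i).1 (P i).2.1 ∧ G.Adj (P i).2.1 (P i).2.2) ∧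
  ∀ i j, i ≠ j → Disjoint (tripleNodes (P i)) (tripleNodes (P j))

open Finset

section Helpers
variable [DecidableEq V]

@[simp] lemma mem_tripleNodes {p : V × V × V} {x : V} :
    x ∈ tripleNodes p ↔ x = p.1 ∨ x = p.2.1 ∨ x = p.2.2 := by
  simp [tripleNodes]

lemma card_pair_le' (x y : V) : ({x, y} : Finset V).card ≤ 2 := by
  refine le_trans (Finset.card_insert_le _ _) ?_; simp

lemma triple_ne {p : V × V × V} (h : (tripleNodes p).card = 3) :
    p.1 ≠ p.2.1 ∧ p.1 ≠ p.2.2 ∧ p.2.1 ≠ p.2.2 := by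
  rw [tripleNodes] at h
  refine ⟨?_, ?_, ?_⟩ <;> intro he
  · have hsub : ({p.1, p.2.1, p.2.2} : Finset V) ⊆ {p.2.1, p.2.2} := by
      intro x hx; simp at hx ⊢; rcases hx with h1 | h1 | h1 <;> simp [h1, he]
    have := le_trans (Finset.card_le_card hsub) (card_pair_le' p.2.1 p.2.2); omega
  · have hsub : ({p.1, p.2.1, p.2.2} : Finset V) ⊆ {p.2.1, p.2.2} := by
      intro x hx; simp at hx ⊢; rcases hx with h1 | h1 | h1 <;> simp [h1, he]
    have := le_trans (Finset.card_le_card hsub) (card_pair_le' p.2.1 p.2.2); omega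
  · have hsub : ({p.1, p.2.1, p.2.2} : Finset V) ⊆ {p.1, p.2.2} := by
      intro x hx; simp at hx ⊢; rcases hx with h1 | h1 | h1 <;> simp [h1, he]
    have := le_trans (Finset.card_le_card hsub) (card_pair_le' p.1 p.2.2); omega

lemma card_triple_inter {a b c : V} (hab : a ≠ b) (hac : a ≠ c) (hbc : b ≠ c)
    (S : Finset V) [DecidablePred (· ∈ S)] :
    (({a, b, c} : Finset V) ∩ S).card =
      (if a ∈ S then 1 else 0) + (if b ∈ S then 1 else 0) + (if c ∈ S then 1 else 0) := by
  have : ({a, b, c} : Finset V) ∩ S = ({a, b, c} : Finset V).filter (· ∈ S) := by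
    ext x; simp [Finset.mem_filter, and_comm]
  rw [this]
  rw [Finset.filter_insert, Finset.filter_insert, Finset.filter_singleton]
  by_cases ha : a ∈ S <;> by_cases hb : b ∈ S <;> by_cases hc : c ∈ S <;>
    simp [ha, hb, hc, Finset.card_insert_of_notMem, hab, hac, hbc]

lemma card_triple_eq_three {a b c : V} (hab : a ≠ b) (hac : a ≠ c) (hbc : b ≠ c) :
    ({a, b, c} : Finset V).card = 3 := by
  rw [Finset.card_insert_of_notMem (by simp [hab, hac]),
      Finset.card_insert_of_notMem (by simp [hbc])]
  simp

lemma triple_perm_rev (a b c : V) : ({a, b, c} : Finset V) = {c, b, a} := by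
  ext x; simp; tauto

lemma triple_perm_rot (a b c : V) : ({a, b, c} : Finset V) = {b, c, a} := by
  ext x; simp; tauto

lemma triple_perm_swap12 (a b c : V) : ({a, b, c} : Finset V) = {b, a, c} := by
  ext x; simp; tauto

lemma triple_perm_swap23 (a b c : V) : ({a, b, c} : Finset V) = {a, c, b} := by
  ext x; simp; tauto

end Helpers

section Main
set_option linter.unusedSectionVars false
open Finset
variable [DecidableEq V] [Fintype V]

def VSet {t : ℕ} (Q : Fin t → V × V × V) : Finset V :=
  Finset.univ.biUnion fun j => tripleNodes (Q j)

@[simp] lemma mem_VSet {t : ℕ} {Q : Fin t → V × V × V} {x : V} :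
    x ∈ VSet Q ↔ ∃ j, x ∈ tripleNodes (Q j) := by simp [VSet]

variable {k : ℕ} (P : Fin (k - 1) → V × V × V) (Q : Fin k → V × V × V)

/-- coverage count -/
def ccP : ℕ := (VSet Q ∩ VSet P).card

/-- number of realized P-indices -/
def rrP : ℕ :=
  (Finset.univ.filter fun l => ∃ j, tripleNodes (Q j) = tripleNodes (P l)).card

variable {P Q} {G : SimpleGraph V}

lemma host_unique (hQ : IsP2Packing G k Q) {v : V} {j j' : Fin k}
    (h1 : v ∈ tripleNodes (Q j)) (h2 : v ∈ tripleNodes (Q j')) : j = j' := by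
  by_contra hne
  exact (Finset.disjoint_left.mp (hQ.2 j j' hne) h1) h2

lemma phost_unique (hP : IsP2Packing G (k-1) P) {v : V} {i i' : Fin (k-1)}
    (h1 : v ∈ tripleNodes (P i)) (h2 : v ∈ tripleNodes (P i')) : i = i' := by
  by_contra hne
  exact (Finset.disjoint_left.mp (hP.2 i i' hne) h1) h2

lemma ccP_eq_sum (hQ : IsP2Packing G k Q) :
    ccP P Q = ∑ j, (tripleNodes (Q j) ∩ VSet P).card := by
  have h1 : VSet Q ∩ VSet P = Finset.univ.biUnion fun j => tripleNodes (Q j) ∩ VSet P := by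
    ext x; simp [VSet]
  rw [ccP, h1, Finset.card_biUnion]
  intro i _ j _ hij
  exact Finset.disjoint_of_subset_left (Finset.inter_subset_left)
    (Finset.disjoint_of_subset_right (Finset.inter_subset_left) (hQ.2 i j hij))

lemma ccP_eq_sum' (hP : IsP2Packing G (k-1) P) :
    ccP P Q = ∑ i, (VSet Q ∩ tripleNodes (P i)).card := by
  have h1 : VSet Q ∩ VSet P = Finset.univ.biUnion fun i => VSet Q ∩ tripleNodes (P i) := by
    ext x; simp [VSet]
  rw [ccP, h1, Finset.card_biUnion]
  intro i _ j _ hij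
  exact Finset.disjoint_of_subset_left (Finset.inter_subset_right)
    (Finset.disjoint_of_subset_right (Finset.inter_subset_right) (hP.2 i j hij))

lemma sum_off_eq {f g : Fin k → ℕ} {s : Finset (Fin k)} (h : ∀ j ∉ s, f j = g j) :
    ∑ j, f j + ∑ j ∈ s, g j = ∑ j, g j + ∑ j ∈ s, f j := by
  have hs : s ⊆ Finset.univ := Finset.subset_univ s
  rw [← Finset.sum_sdiff hs (f := f), ← Finset.sum_sdiff hs (f := g)]
  have : ∑ j ∈ Finset.univ \ s, f j = ∑ j ∈ Finset.univ \ s, g j := by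
    apply Finset.sum_congr rfl; intro j hj
    exact h j (Finset.mem_sdiff.mp hj).2
  omega

lemma pack_update1 (hQ : IsP2Packing G k Q) {j0 : Fin k} {D : V × V × V}
    (hD3 : (tripleNodes D).card = 3) (hDa : G.Adj D.1 D.2.1) (hDb : G.Adj D.2.1 D.2.2)
    (hdisj : ∀ j, j ≠ j0 → Disjoint (tripleNodes D) (tripleNodes (Q j))) :
    IsP2Packing G k (Function.update Q j0 D) := by
  constructor
  · intro i
    simp only [Function.update_apply]
    split_ifs with h
    · exact ⟨hD3, hDa, hDb⟩
    · exact hQ.1 i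
  · intro i j hij
    simp only [Function.update_apply]
    split_ifs with h1 h2 h2
    · exact absurd (h1.trans h2.symm) hij
    · exact hdisj j h2
    · exact (hdisj i h1).symm
    · exact hQ.2 i j hij

end Main

section Main2
set_option linter.unusedSectionVars false
open Finset
variable [DecidableEq V] [Fintype V]
variable {k : ℕ} {P : Fin (k - 1) → V × V × V} {Q : Fin k → V × V × V} {G : SimpleGraph V}

lemma path_subset_VSet {t : ℕ} {Q : Fin t → V × V × V} (j : Fin t) :
    tripleNodes (Q j) ⊆ VSet Q := by
  intro x hx; simp only [mem_VSet]; exact ⟨j, hx⟩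

lemma ccP_update_eq {Q' : Fin k → V × V × V} (hQ : IsP2Packing G k Q)
    (hQ' : IsP2Packing G k Q') {s : Finset (Fin k)} (hoff : ∀ j ∉ s, Q' j = Q j) :
    ccP P Q' + ∑ j ∈ s, (tripleNodes (Q j) ∩ VSet P).card
      = ccP P Q + ∑ j ∈ s, (tripleNodes (Q' j) ∩ VSet P).card := by
  rw [ccP_eq_sum hQ, ccP_eq_sum hQ']
  exact sum_off_eq (fun j hj => by rw [hoff j hj])

lemma rrP_succ {Q' : Fin k → V × V × V} {s : Finset (Fin k)}
    (hoff : ∀ j ∉ s, Q' j = Q j)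
    (hrm : ∀ j ∈ s, ∀ m, tripleNodes (Q j) ≠ tripleNodes (P m))
    {l : Fin (k - 1)} (hl_new : ∃ j', tripleNodes (Q' j') = tripleNodes (P l))
    (hl_old : ∀ j, tripleNodes (Q j) ≠ tripleNodes (P l)) :
    rrP P Q + 1 ≤ rrP P Q' := by
  classical
  have hsub : insert l (Finset.univ.filter fun m => ∃ j, tripleNodes (Q j) = tripleNodes (P m))
      ⊆ Finset.univ.filter fun m => ∃ j, tripleNodes (Q' j) = tripleNodes (P m) := by
    intro m hm
    simp only [Finset.mem_insert, Finset.mem_filter, Finset.mem_univ, true_and] at hm ⊢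
    rcases hm with rfl | ⟨j, hj⟩
    · exact hl_new
    · have hjs : j ∉ s := fun hjs => hrm j hjs m hj
      exact ⟨j, by rw [hoff j hjs]; exact hj⟩
  have hlni : l ∉ (Finset.univ.filter fun m => ∃ j, tripleNodes (Q j) = tripleNodes (P m)) := by
    simp only [Finset.mem_filter, Finset.mem_univ, true_and, not_exists]
    exact hl_old
  have := Finset.card_le_card hsub
  rw [Finset.card_insert_of_notMem hlni] at this
  simpa [rrP] using this

lemma unreal_of_small (hP : IsP2Packing G (k-1) P) {j : Fin k}
    (hj : (tripleNodes (Q j) ∩ VSet P).card ≤ 2) :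
    ∀ m, tripleNodes (Q j) ≠ tripleNodes (P m) := by
  intro m he
  have hsub : tripleNodes (P m) ⊆ VSet P := path_subset_VSet m
  rw [he, Finset.inter_eq_left.mpr hsub, (hP.1 m).1] at hj
  omega

lemma unreal_of_defvertex (hP : IsP2Packing G (k-1) P) (hQ : IsP2Packing G k Q)
    {v : V} {j : Fin k} {m : Fin (k-1)}
    (hvq : v ∈ tripleNodes (Q j)) (hvp : v ∈ tripleNodes (P m))
    (hm : (VSet Q ∩ tripleNodes (P m)).card ≤ 2) :
    ∀ m', tripleNodes (Q j) ≠ tripleNodes (P m') := by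
  intro m' he
  have hv' : v ∈ tripleNodes (P m') := he ▸ hvq
  have : m' = m := phost_unique hP hv' hvp
  subst this
  have hsub : tripleNodes (P m') ⊆ VSet Q := he ▸ path_subset_VSet j
  rw [Finset.inter_eq_right.mpr hsub, (hP.1 m').1] at hm
  omega

lemma sel_def (hP : IsP2Packing G (k-1) P) {i : Fin (k-1)}
    (hd : (VSet Q ∩ tripleNodes (P i)).card = 2) :
    ∃ q f w, tripleNodes (P i) = {q, f, w} ∧ q ≠ f ∧ q ≠ w ∧ f ≠ w ∧ G.Adj q f ∧
      q ∈ VSet Q ∧ w ∈ VSet Q ∧ f ∉ VSet Q := by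
  obtain ⟨hc3, hadj1, hadj2⟩ := hP.1 i
  obtain ⟨h12, h13, h23⟩ := triple_ne hc3
  rw [Finset.inter_comm] at hd
  rw [show tripleNodes (P i) = {(P i).1, (P i).2.1, (P i).2.2} from rfl] at hd
  rw [card_triple_inter h12 h13 h23] at hd
  by_cases m1 : (P i).1 ∈ VSet Q <;> by_cases m2 : (P i).2.1 ∈ VSet Q <;>
    by_cases m3 : (P i).2.2 ∈ VSet Q <;> simp [m1, m2, m3] at hd
  · -- .2.2 free
    exact ⟨(P i).2.1, (P i).2.2, (P i).1,
      by ext x; simp [tripleNodes]; try tauto, h23, h12.symm, h13.symm, hadj2, m2, m1, m3⟩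
  · -- .2.1 free
    exact ⟨(P i).1, (P i).2.1, (P i).2.2,
      by ext x; simp [tripleNodes]; try tauto, h12, h13, h23, hadj1, m1, m3, m2⟩
  · -- .1 free
    exact ⟨(P i).2.1, (P i).1, (P i).2.2,
      by ext x; simp [tripleNodes]; try tauto, h12.symm, h23, h13, hadj1.symm, m2, m3, m1⟩

lemma host_dec (hQ : IsP2Packing G k Q) {q : V} (hq : q ∈ VSet Q) :
    ∃ (j : Fin k) (n r : V), tripleNodes (Q j) = {q, n, r} ∧ q ≠ n ∧ q ≠ r ∧ n ≠ r ∧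
      G.Adj q n ∧ n ∈ tripleNodes (Q j) ∧ r ∈ tripleNodes (Q j) := by
  obtain ⟨j, hj⟩ := mem_VSet.mp hq
  obtain ⟨hc3, hadj1, hadj2⟩ := hQ.1 j
  obtain ⟨h12, h13, h23⟩ := triple_ne hc3
  have hmem1 : (Q j).1 ∈ tripleNodes (Q j) := by simp
  have hmem2 : (Q j).2.1 ∈ tripleNodes (Q j) := by simp
  have hmem3 : (Q j).2.2 ∈ tripleNodes (Q j) := by simp
  rcases mem_tripleNodes.mp hj with h | h | h
  · exact ⟨j, (Q j).2.1, (Q j).2.2, by rw [h]; rfl, h ▸ h12, h ▸ h13, h23,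
      h ▸ hadj1, hmem2, hmem3⟩
  · refine ⟨j, (Q j).2.2, (Q j).1, ?_, h ▸ h23, h ▸ h12.symm, h13.symm,
      h ▸ hadj2, hmem3, hmem1⟩
    rw [h]; ext x; simp [tripleNodes]; try tauto
  · refine ⟨j, (Q j).2.1, (Q j).1, ?_, h ▸ h23.symm, h ▸ h13.symm, h12.symm,
      h ▸ hadj2.symm, hmem2, hmem1⟩
    rw [h]; ext x; simp [tripleNodes]; try tauto

lemma host_dec_pair (hQ : IsP2Packing G k Q) {q q' : V} {j : Fin k}
    (hq : q ∈ tripleNodes (Q j)) (hq' : q' ∈ tripleNodes (Q j)) (hne : q ≠ q') :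
    ∃ n, (tripleNodes (Q j) = {q, n, q'} ∧ G.Adj q n ∧ q ≠ n ∧ n ≠ q') ∨
         (tripleNodes (Q j) = {q', n, q} ∧ G.Adj q' n ∧ q' ≠ n ∧ n ≠ q) := by
  obtain ⟨hc3, hadj1, hadj2⟩ := hQ.1 j
  obtain ⟨h12, h13, h23⟩ := triple_ne hc3
  rcases mem_tripleNodes.mp hq with h1 | h1 | h1 <;>
    rcases mem_tripleNodes.mp hq' with h2 | h2 | h2
  · exact absurd (h1.trans h2.symm) hne
  · -- q = x, q' = y : use second disjunct with rotator q'=y, n=z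
    refine ⟨(Q j).2.2, Or.inr ⟨?_, h2 ▸ hadj2, h2 ▸ h23, h1 ▸ h13.symm⟩⟩
    rw [h1, h2]; ext x; simp [tripleNodes]; try tauto
  · -- q = x, q' = z : first, n = y
    refine ⟨(Q j).2.1, Or.inl ⟨?_, h1 ▸ hadj1, h1 ▸ h12, h2 ▸ h23⟩⟩
    rw [h1, h2]; ext x; simp [tripleNodes]; try tauto
  · -- q = y, q' = x : first, n = z
    refine ⟨(Q j).2.2, Or.inl ⟨?_, h1 ▸ hadj2, h1 ▸ h23, h2 ▸ h13.symm⟩⟩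
    rw [h1, h2]; ext x; simp [tripleNodes]; try tauto
  · exact absurd (h1.trans h2.symm) hne
  · -- q = y, q' = z : first, n = x
    refine ⟨(Q j).1, Or.inl ⟨?_, h1 ▸ hadj1.symm, h1 ▸ h12.symm, h2 ▸ h13⟩⟩
    rw [h1, h2]; ext x; simp [tripleNodes]; try tauto
  · -- q = z, q' = x : first, n = y
    refine ⟨(Q j).2.1, Or.inl ⟨?_, h1 ▸ hadj2.symm, h1 ▸ h23.symm, h2 ▸ h12.symm⟩⟩
    rw [h1, h2]; ext x; simp [tripleNodes]; try tauto
  · -- q = z, q' = y : second, rotator q'=y, n = x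
    refine ⟨(Q j).1, Or.inr ⟨?_, h2 ▸ hadj1.symm, h2 ▸ h12.symm, h1 ▸ h13⟩⟩
    rw [h1, h2]; ext x; simp [tripleNodes]; try tauto
  · exact absurd (h1.trans h2.symm) hne

lemma rrP_le : rrP P Q ≤ k - 1 := by
  refine le_trans (Finset.card_filter_le _ _) ?_
  simp

lemma opt_cc
    (hopt : ∀ Q', IsP2Packing G k Q' →
      (3*k+1) * ccP P Q' + rrP P Q' ≤ (3*k+1) * ccP P Q + rrP P Q)
    {Q' : Fin k → V × V × V} (hQ' : IsP2Packing G k Q') : ccP P Q' ≤ ccP P Q := by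
  by_contra hlt
  push_neg at hlt
  have h1 : (3*k+1) * (ccP P Q + 1) ≤ (3*k+1) * ccP P Q' := Nat.mul_le_mul_left _ hlt
  have h2 := hopt Q' hQ'
  have h3 : rrP P Q ≤ k - 1 := rrP_le
  have h4 : (3*k+1) * (ccP P Q + 1) = (3*k+1) * ccP P Q + (3*k+1) := by ring
  omega

lemma opt_rr
    (hopt : ∀ Q', IsP2Packing G k Q' →
      (3*k+1) * ccP P Q' + rrP P Q' ≤ (3*k+1) * ccP P Q + rrP P Q)
    {Q' : Fin k → V × V × V} (hQ' : IsP2Packing G k Q') (hc : ccP P Q' = ccP P Q) :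
    rrP P Q' ≤ rrP P Q := by
  have h2 := hopt Q' hQ'
  rw [hc] at h2
  omega

end Main2

section Main3
set_option linter.unusedSectionVars false
set_option maxHeartbeats 1000000
open Finset
variable [DecidableEq V] [Fintype V]
variable {k : ℕ} {P : Fin (k - 1) → V × V × V} {Q : Fin k → V × V × V} {G : SimpleGraph V}

/-- master single-swap optimality lemma -/
lemma move1 (hP : IsP2Packing G (k-1) P) (hQ : IsP2Packing G k Q)
    (hopt : ∀ Q', IsP2Packing G k Q' →
      (3*k+1) * ccP P Q' + rrP P Q' ≤ (3*k+1) * ccP P Q + rrP P Q)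
    {j0 : Fin k} {D : V × V × V}
    (hD3 : (tripleNodes D).card = 3) (hDa : G.Adj D.1 D.2.1) (hDb : G.Adj D.2.1 D.2.2)
    (hdisj : ∀ j, j ≠ j0 → Disjoint (tripleNodes D) (tripleNodes (Q j))) :
    (tripleNodes D ∩ VSet P).card ≤ (tripleNodes (Q j0) ∩ VSet P).card ∧
    ((tripleNodes D ∩ VSet P).card = (tripleNodes (Q j0) ∩ VSet P).card →
      ∀ l, (∀ m, tripleNodes (Q j0) ≠ tripleNodes (P m)) →
        tripleNodes D = tripleNodes (P l) →
        (∀ j, tripleNodes (Q j) ≠ tripleNodes (P l)) → False) := by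
  set Q' := Function.update Q j0 D with hQ'def
  have hQ' : IsP2Packing G k Q' := pack_update1 hQ hD3 hDa hDb hdisj
  have hoff : ∀ j ∉ ({j0} : Finset (Fin k)), Q' j = Q j := by
    intro j hj; simp only [Finset.mem_singleton] at hj
    simp [hQ'def, Function.update_of_ne hj]
  have hcc := ccP_update_eq (P := P) hQ hQ' hoff
  rw [Finset.sum_singleton, Finset.sum_singleton] at hcc
  have hQ'j0 : Q' j0 = D := by simp [hQ'def]
  rw [hQ'j0] at hcc
  have hle : ccP P Q' ≤ ccP P Q := opt_cc hopt hQ'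
  constructor
  · omega
  · intro heq l hrm hDl hlold
    have hcc' : ccP P Q' = ccP P Q := by omega
    have hrr := opt_rr hopt hQ' hcc'
    have : rrP P Q + 1 ≤ rrP P Q' := by
      refine rrP_succ hoff ?_ ⟨j0, by rw [hQ'j0]; exact hDl⟩ hlold
      intro j hj; simp only [Finset.mem_singleton] at hj; subst hj; exact hrm
    omega

/-- master double-swap optimality lemma -/
lemma move2 (hP : IsP2Packing G (k-1) P) (hQ : IsP2Packing G k Q)
    (hopt : ∀ Q', IsP2Packing G k Q' →
      (3*k+1) * ccP P Q' + rrP P Q' ≤ (3*k+1) * ccP P Q + rrP P Q)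
    {j1 j2 : Fin k} (hj12 : j1 ≠ j2) {D1 D2 : V × V × V}
    (hD13 : (tripleNodes D1).card = 3) (hD1a : G.Adj D1.1 D1.2.1) (hD1b : G.Adj D1.2.1 D1.2.2)
    (hD23 : (tripleNodes D2).card = 3) (hD2a : G.Adj D2.1 D2.2.1) (hD2b : G.Adj D2.2.1 D2.2.2)
    (hdisj1 : ∀ j, j ≠ j1 → Disjoint (tripleNodes D1) (tripleNodes (Q j)))
    (hd12 : Disjoint (tripleNodes D1) (tripleNodes D2))
    (hdisj2 : ∀ j, j ≠ j1 → j ≠ j2 → Disjoint (tripleNodes D2) (tripleNodes (Q j))) :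
    (tripleNodes D1 ∩ VSet P).card + (tripleNodes D2 ∩ VSet P).card
      ≤ (tripleNodes (Q j1) ∩ VSet P).card + (tripleNodes (Q j2) ∩ VSet P).card ∧
    ((tripleNodes D1 ∩ VSet P).card + (tripleNodes D2 ∩ VSet P).card
      = (tripleNodes (Q j1) ∩ VSet P).card + (tripleNodes (Q j2) ∩ VSet P).card →
      ∀ l, (∀ m, tripleNodes (Q j1) ≠ tripleNodes (P m)) →
        (∀ m, tripleNodes (Q j2) ≠ tripleNodes (P m)) →
        (tripleNodes D1 = tripleNodes (P l) ∨ tripleNodes D2 = tripleNodes (P l)) →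
        (∀ j, tripleNodes (Q j) ≠ tripleNodes (P l)) → False) := by
  set Q1 := Function.update Q j1 D1 with hQ1def
  set Q' := Function.update Q1 j2 D2 with hQ'def
  have hQ1 : IsP2Packing G k Q1 := pack_update1 hQ hD13 hD1a hD1b hdisj1
  have hQ' : IsP2Packing G k Q' := by
    refine pack_update1 hQ1 hD23 hD2a hD2b ?_
    intro j hj
    rcases eq_or_ne j j1 with rfl | hjne
    · rw [hQ1def]; simp only [Function.update_self]; exact hd12.symm
    · rw [hQ1def]; simp only [Function.update_of_ne hjne]; exact hdisj2 j hjne hj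
  have hoff : ∀ j ∉ ({j1, j2} : Finset (Fin k)), Q' j = Q j := by
    intro j hj
    simp only [Finset.mem_insert, Finset.mem_singleton, not_or] at hj
    rw [hQ'def, Function.update_of_ne hj.2, hQ1def, Function.update_of_ne hj.1]
  have hQ'j1 : Q' j1 = D1 := by
    rw [hQ'def, Function.update_of_ne hj12, hQ1def, Function.update_self]
  have hQ'j2 : Q' j2 = D2 := by rw [hQ'def, Function.update_self]
  have hcc := ccP_update_eq (P := P) hQ hQ' hoff
  rw [Finset.sum_pair hj12, Finset.sum_pair hj12, hQ'j1, hQ'j2] at hcc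
  have hle : ccP P Q' ≤ ccP P Q := opt_cc hopt hQ'
  constructor
  · omega
  · intro heq l hrm1 hrm2 hDl hlold
    have hcc' : ccP P Q' = ccP P Q := by omega
    have hrr := opt_rr hopt hQ' hcc'
    have : rrP P Q + 1 ≤ rrP P Q' := by
      refine rrP_succ hoff ?_ ?_ hlold
      · intro j hj
        simp only [Finset.mem_insert, Finset.mem_singleton] at hj
        rcases hj with rfl | rfl
        · exact hrm1
        · exact hrm2
      · rcases hDl with h | h
        · exact ⟨j1, by rw [hQ'j1]; exact h⟩
        · exact ⟨j2, by rw [hQ'j2]; exact h⟩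
    omega

/-- master triple-swap optimality lemma -/
lemma move3 (hP : IsP2Packing G (k-1) P) (hQ : IsP2Packing G k Q)
    (hopt : ∀ Q', IsP2Packing G k Q' →
      (3*k+1) * ccP P Q' + rrP P Q' ≤ (3*k+1) * ccP P Q + rrP P Q)
    {j1 j2 j3 : Fin k} (h12 : j1 ≠ j2) (h13 : j1 ≠ j3) (h23 : j2 ≠ j3)
    {D1 D2 D3 : V × V × V}
    (hD13 : (tripleNodes D1).card = 3) (hD1a : G.Adj D1.1 D1.2.1) (hD1b : G.Adj D1.2.1 D1.2.2)
    (hD23 : (tripleNodes D2).card = 3) (hD2a : G.Adj D2.1 D2.2.1) (hD2b : G.Adj D2.2.1 D2.2.2)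
    (hD33 : (tripleNodes D3).card = 3) (hD3a : G.Adj D3.1 D3.2.1) (hD3b : G.Adj D3.2.1 D3.2.2)
    (hdisj1 : ∀ j, j ≠ j1 → Disjoint (tripleNodes D1) (tripleNodes (Q j)))
    (hd12 : Disjoint (tripleNodes D1) (tripleNodes D2))
    (hdisj2 : ∀ j, j ≠ j1 → j ≠ j2 → Disjoint (tripleNodes D2) (tripleNodes (Q j)))
    (hd13 : Disjoint (tripleNodes D1) (tripleNodes D3))
    (hd23 : Disjoint (tripleNodes D2) (tripleNodes D3))
    (hdisj3 : ∀ j, j ≠ j1 → j ≠ j2 → j ≠ j3 → Disjoint (tripleNodes D3) (tripleNodes (Q j))) :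
    (tripleNodes D1 ∩ VSet P).card + (tripleNodes D2 ∩ VSet P).card
        + (tripleNodes D3 ∩ VSet P).card
      ≤ (tripleNodes (Q j1) ∩ VSet P).card + (tripleNodes (Q j2) ∩ VSet P).card
        + (tripleNodes (Q j3) ∩ VSet P).card ∧
    ((tripleNodes D1 ∩ VSet P).card + (tripleNodes D2 ∩ VSet P).card
        + (tripleNodes D3 ∩ VSet P).card
      = (tripleNodes (Q j1) ∩ VSet P).card + (tripleNodes (Q j2) ∩ VSet P).card
        + (tripleNodes (Q j3) ∩ VSet P).card →
      ∀ l, (∀ m, tripleNodes (Q j1) ≠ tripleNodes (P m)) →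
        (∀ m, tripleNodes (Q j2) ≠ tripleNodes (P m)) →
        (∀ m, tripleNodes (Q j3) ≠ tripleNodes (P m)) →
        (tripleNodes D3 = tripleNodes (P l)) →
        (∀ j, tripleNodes (Q j) ≠ tripleNodes (P l)) → False) := by
  set Q1 := Function.update Q j1 D1 with hQ1def
  set Q2 := Function.update Q1 j2 D2 with hQ2def
  set Q' := Function.update Q2 j3 D3 with hQ'def
  have hQ1 : IsP2Packing G k Q1 := pack_update1 hQ hD13 hD1a hD1b hdisj1
  have hQ2 : IsP2Packing G k Q2 := by
    refine pack_update1 hQ1 hD23 hD2a hD2b ?_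
    intro j hj
    rcases eq_or_ne j j1 with rfl | hjne
    · rw [hQ1def]; simp only [Function.update_self]; exact hd12.symm
    · rw [hQ1def]; simp only [Function.update_of_ne hjne]; exact hdisj2 j hjne hj
  have hQ' : IsP2Packing G k Q' := by
    refine pack_update1 hQ2 hD33 hD3a hD3b ?_
    intro j hj
    rcases eq_or_ne j j2 with rfl | hjne2
    · rw [hQ2def]; simp only [Function.update_self]; exact hd23.symm
    · rw [hQ2def]; simp only [Function.update_of_ne hjne2]
      rcases eq_or_ne j j1 with rfl | hjne1
      · rw [hQ1def]; simp only [Function.update_self]; exact hd13.symm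
      · rw [hQ1def]; simp only [Function.update_of_ne hjne1]
        exact hdisj3 j hjne1 hjne2 hj
  have hoff : ∀ j ∉ ({j1, j2, j3} : Finset (Fin k)), Q' j = Q j := by
    intro j hj
    simp only [Finset.mem_insert, Finset.mem_singleton, not_or] at hj
    rw [hQ'def, Function.update_of_ne hj.2.2, hQ2def, Function.update_of_ne hj.2.1,
      hQ1def, Function.update_of_ne hj.1]
  have hQ'j1 : Q' j1 = D1 := by
    rw [hQ'def, Function.update_of_ne h13, hQ2def, Function.update_of_ne h12,
      hQ1def, Function.update_self]
  have hQ'j2 : Q' j2 = D2 := by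
    rw [hQ'def, Function.update_of_ne h23, hQ2def, Function.update_self]
  have hQ'j3 : Q' j3 = D3 := by rw [hQ'def, Function.update_self]
  have hnm : j1 ∉ ({j2, j3} : Finset (Fin k)) := by simp [h12, h13]
  have hcc := ccP_update_eq (P := P) hQ hQ' hoff
  rw [show ({j1, j2, j3} : Finset (Fin k)) = insert j1 {j2, j3} from rfl] at hcc
  rw [Finset.sum_insert hnm, Finset.sum_insert hnm, Finset.sum_pair h23,
    Finset.sum_pair h23, hQ'j1, hQ'j2, hQ'j3] at hcc
  have hle : ccP P Q' ≤ ccP P Q := opt_cc hopt hQ'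
  constructor
  · omega
  · intro heq l hrm1 hrm2 hrm3 hDl hlold
    have hcc' : ccP P Q' = ccP P Q := by omega
    have hrr := opt_rr hopt hQ' hcc'
    have : rrP P Q + 1 ≤ rrP P Q' := by
      refine rrP_succ hoff ?_ ⟨j3, by rw [hQ'j3]; exact hDl⟩ hlold
      intro j hj
      simp only [Finset.mem_insert, Finset.mem_singleton] at hj
      rcases hj with rfl | rfl | rfl
      · exact hrm1
      · exact hrm2
      · exact hrm3
    omega

end Main3

section Main4
set_option linter.unusedSectionVars false
set_option maxHeartbeats 1000000
open Finset
variable [DecidableEq V] [Fintype V]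
variable {k : ℕ} {P : Fin (k - 1) → V × V × V} {Q : Fin k → V × V × V} {G : SimpleGraph V}

lemma mem_P_ne (hP : IsP2Packing G (k-1) P) {v : V} {i l : Fin (k-1)}
    (h1 : v ∈ tripleNodes (P i)) (hne : i ≠ l) : v ∉ tripleNodes (P l) :=
  fun h2 => hne (phost_unique hP h1 h2)

lemma t_le3 (hQ : IsP2Packing G k Q) (j : Fin k) :
    (tripleNodes (Q j) ∩ VSet P).card ≤ 3 :=
  le_trans (Finset.card_le_card Finset.inter_subset_left) (le_of_eq (hQ.1 j).1)

lemma d_le3 (hP : IsP2Packing G (k-1) P) (i : Fin (k-1)) :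
    (VSet Q ∩ tripleNodes (P i)).card ≤ 3 :=
  le_trans (Finset.card_le_card Finset.inter_subset_right) (le_of_eq (hP.1 i).1)

lemma tP_full (hP : IsP2Packing G (k-1) P) (i : Fin (k-1)) :
    (tripleNodes (P i) ∩ VSet P).card = 3 := by
  rw [Finset.inter_eq_left.mpr (path_subset_VSet i), (hP.1 i).1]

lemma ccP_le (hP : IsP2Packing G (k-1) P) (hQ : IsP2Packing G k Q) :
    ccP P Q ≤ 3 * (k - 1) := by
  rw [ccP_eq_sum' (Q := Q) hP]
  calc ∑ i, (VSet Q ∩ tripleNodes (P i)).card ≤ ∑ _i : Fin (k-1), 3 :=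
        Finset.sum_le_sum fun i _ => d_le3 hP i
    _ = 3 * (k - 1) := by simp [Finset.sum_const, mul_comm]

lemma exists_small_t (hk : 1 ≤ k) (hP : IsP2Packing G (k-1) P) (hQ : IsP2Packing G k Q) :
    ∃ j0 : Fin k, (tripleNodes (Q j0) ∩ VSet P).card ≤ 2 := by
  by_contra hall
  push_neg at hall
  have h1 : ∀ j, (tripleNodes (Q j) ∩ VSet P).card = 3 :=
    fun j => le_antisymm (t_le3 hQ j) (hall j)
  have h2 : ccP P Q = 3 * k := by
    rw [ccP_eq_sum hQ]
    rw [Finset.sum_congr rfl fun j _ => h1 j]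
    simp [Finset.sum_const, mul_comm]
  have := ccP_le hP hQ
  omega

lemma unreal_of_defP (hP : IsP2Packing G (k-1) P) {l : Fin (k-1)}
    (hl : (VSet Q ∩ tripleNodes (P l)).card ≤ 2) :
    ∀ j, tripleNodes (Q j) ≠ tripleNodes (P l) := by
  intro j he
  have hsub : tripleNodes (P l) ⊆ VSet Q := he ▸ path_subset_VSet j
  rw [Finset.inter_eq_right.mpr hsub, (hP.1 l).1] at hl
  omega

lemma fact1 (hk : 1 ≤ k) (hP : IsP2Packing G (k-1) P) (hQ : IsP2Packing G k Q)
    (hopt : ∀ Q', IsP2Packing G k Q' →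
      (3*k+1) * ccP P Q' + rrP P Q' ≤ (3*k+1) * ccP P Q + rrP P Q)
    (i : Fin (k-1)) : 2 ≤ (VSet Q ∩ tripleNodes (P i)).card := by
  by_contra hlt
  push_neg at hlt
  interval_cases hd : (VSet Q ∩ tripleNodes (P i)).card
  · -- d = 0 : no vertex of S_i covered
    have hempty : ∀ v ∈ tripleNodes (P i), v ∉ VSet Q := by
      intro v hv hvQ
      have : v ∈ VSet Q ∩ tripleNodes (P i) := Finset.mem_inter.mpr ⟨hvQ, hv⟩
      rw [Finset.card_eq_zero.mp hd] at this
      exact absurd this (Finset.notMem_empty v)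
    obtain ⟨j0, hj0⟩ := exists_small_t hk hP hQ
    obtain ⟨hi3, hia, hib⟩ := hP.1 i
    have hdisj : ∀ j, j ≠ j0 → Disjoint (tripleNodes (P i)) (tripleNodes (Q j)) := by
      intro j _
      rw [Finset.disjoint_left]
      intro u hu huj
      exact hempty u hu (path_subset_VSet j huj)
    have hm := (move1 hP hQ hopt (j0 := j0) hi3 hia hib hdisj).1
    rw [tP_full hP i] at hm
    omega
  · -- d = 1
    obtain ⟨v, hv⟩ := Finset.card_eq_one.mp hd
    have hvmem : v ∈ VSet Q ∧ v ∈ tripleNodes (P i) := by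
      have : v ∈ VSet Q ∩ tripleNodes (P i) := by rw [hv]; simp
      exact Finset.mem_inter.mp this
    have honly : ∀ u ∈ tripleNodes (P i), u ≠ v → u ∉ VSet Q := by
      intro u hu hne huQ
      have : u ∈ VSet Q ∩ tripleNodes (P i) := Finset.mem_inter.mpr ⟨huQ, hu⟩
      rw [hv] at this
      exact hne (Finset.mem_singleton.mp this)
    obtain ⟨j0, hj0⟩ := mem_VSet.mp hvmem.1
    obtain ⟨hi3, hia, hib⟩ := hP.1 i
    have hdisj : ∀ j, j ≠ j0 → Disjoint (tripleNodes (P i)) (tripleNodes (Q j)) := by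
      intro j hj
      rw [Finset.disjoint_left]
      intro u hu huj
      rcases eq_or_ne u v with rfl | hne
      · exact hj (host_unique hQ huj hj0)
      · exact honly u hu hne (path_subset_VSet j huj)
    have hm := move1 hP hQ hopt (j0 := j0) hi3 hia hib hdisj
    rw [tP_full hP i] at hm
    have ht3 : (tripleNodes (Q j0) ∩ VSet P).card = 3 :=
      le_antisymm (t_le3 hQ j0) (by omega)
    refine hm.2 (by omega) i ?_ rfl (unreal_of_defP hP (by omega))
    exact unreal_of_defvertex hP hQ hj0 hvmem.2 (by omega)

lemma fact2 (hk : 1 ≤ k) (hP : IsP2Packing G (k-1) P) (hQ : IsP2Packing G k Q)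
    (hopt : ∀ Q', IsP2Packing G k Q' →
      (3*k+1) * ccP P Q' + rrP P Q' ≤ (3*k+1) * ccP P Q + rrP P Q)
    {i : Fin (k-1)} {q f w : V} {jq jw : Fin k}
    (hset : tripleNodes (P i) = {q, f, w})
    (hq : q ∈ tripleNodes (Q jq)) (hw : w ∈ tripleNodes (Q jw)) (hf : f ∉ VSet Q)
    (hd : (VSet Q ∩ tripleNodes (P i)).card = 2) : jq ≠ jw := by
  rintro rfl
  obtain ⟨hi3, hia, hib⟩ := hP.1 i
  have hdisj : ∀ j, j ≠ jq → Disjoint (tripleNodes (P i)) (tripleNodes (Q j)) := by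
    intro j hj
    rw [Finset.disjoint_left]
    intro u hu huj
    rw [hset] at hu
    simp only [Finset.mem_insert, Finset.mem_singleton] at hu
    rcases hu with rfl | rfl | rfl
    · exact hj (host_unique hQ huj hq)
    · exact hf (path_subset_VSet j huj)
    · exact hj (host_unique hQ huj hw)
  have hm := move1 hP hQ hopt (j0 := jq) hi3 hia hib hdisj
  rw [tP_full hP i] at hm
  have hqP : q ∈ tripleNodes (P i) := by rw [hset]; simp
  refine hm.2 (le_antisymm (t_le3 hQ jq) hm.1).symm i ?_ rfl (unreal_of_defP hP (by omega))
  exact unreal_of_defvertex hP hQ hq hqP (by omega)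

end Main4

section Main5
set_option linter.unusedSectionVars false
set_option maxHeartbeats 600000
open Finset
variable [DecidableEq V] [Fintype V]
variable {k : ℕ} {P : Fin (k - 1) → V × V × V} {Q : Fin k → V × V × V} {G : SimpleGraph V}

lemma rotLemma (hk : 1 ≤ k) (hP : IsP2Packing G (k-1) P) (hQ : IsP2Packing G k Q)
    (hopt : ∀ Q', IsP2Packing G k Q' →
      (3*k+1) * ccP P Q' + rrP P Q' ≤ (3*k+1) * ccP P Q + rrP P Q)
    {i : Fin (k-1)} {q f w : V}
    (hset : tripleNodes (P i) = {q, f, w})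
    (hqf : q ≠ f) (hqw : q ≠ w) (hfw : f ≠ w)
    (hadj : G.Adj q f) (hwQ : w ∈ VSet Q) (hfQ : f ∉ VSet Q)
    (hd : (VSet Q ∩ tripleNodes (P i)).card = 2)
    {j : Fin k} {n r : V}
    (hdec : tripleNodes (Q j) = {q, n, r}) (hqn : q ≠ n) (hqr : q ≠ r) (hnr : n ≠ r)
    (hadjn : G.Adj q n) :
    ∃ l, r ∈ tripleNodes (P l) ∧ (VSet Q ∩ tripleNodes (P l)).card = 3 ∧ l ≠ i := by
  have hqj : q ∈ tripleNodes (Q j) := by rw [hdec]; simp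
  have hnj : n ∈ tripleNodes (Q j) := by rw [hdec]; simp
  have hrj : r ∈ tripleNodes (Q j) := by rw [hdec]; simp
  have hnQ : n ∈ VSet Q := path_subset_VSet j hnj
  have hrQ : r ∈ VSet Q := path_subset_VSet j hrj
  have hqP : q ∈ tripleNodes (P i) := by rw [hset]; simp
  have hfP : f ∈ tripleNodes (P i) := by rw [hset]; simp
  have hwP : w ∈ tripleNodes (P i) := by rw [hset]; simp
  have hqVP : q ∈ VSet P := path_subset_VSet i hqP
  have hfVP : f ∈ VSet P := path_subset_VSet i hfP
  have hfq : f ≠ q := hqf.symm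
  have hfn : f ≠ n := fun h => hfQ (h ▸ hnQ)
  have hfr : f ≠ r := fun h => hfQ (h ▸ hrQ)
  -- the rotated triple D1
  set D1 : V × V × V := (f, q, n) with hD1def
  have hD1set : tripleNodes D1 = {f, q, n} := rfl
  have hD13 : (tripleNodes D1).card = 3 := card_triple_eq_three hfq hfn hqn
  have hD1a : G.Adj D1.1 D1.2.1 := hadj.symm
  have hD1b : G.Adj D1.2.1 D1.2.2 := hadjn
  have hdisj1 : ∀ j', j' ≠ j → Disjoint (tripleNodes D1) (tripleNodes (Q j')) := by
    intro j' hj'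
    rw [hD1set, Finset.disjoint_left]
    intro u hu huj'
    simp only [Finset.mem_insert, Finset.mem_singleton] at hu
    rcases hu with rfl | rfl | rfl
    · exact hfQ (path_subset_VSet j' huj')
    · exact hj' (host_unique hQ huj' hqj)
    · exact hj' (host_unique hQ huj' hnj)
  -- step 1 : r ∈ VSet P
  have hm1 := (move1 hP hQ hopt (j0 := j) hD13 hD1a hD1b hdisj1).1
  have htD1 : (tripleNodes D1 ∩ VSet P).card
      = 1 + 1 + (if n ∈ VSet P then 1 else 0) := by
    rw [hD1set, card_triple_inter hfq hfn hqn, if_pos hfVP, if_pos hqVP]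
  have htj : (tripleNodes (Q j) ∩ VSet P).card
      = 1 + (if n ∈ VSet P then 1 else 0) + (if r ∈ VSet P then 1 else 0) := by
    rw [hdec, card_triple_inter hqn hqr hnr, if_pos hqVP]
  have hrVP : r ∈ VSet P := by
    by_contra hr
    rw [htD1, htj, if_neg hr] at hm1
    omega
  obtain ⟨l, hrl⟩ := mem_VSet.mp hrVP
  -- l ≠ i
  obtain ⟨jw, hjw⟩ := mem_VSet.mp hwQ
  have hjjw : j ≠ jw := fact2 hk hP hQ hopt hset hqj hjw hfQ hd
  have hli : l ≠ i := by
    rintro rfl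
    rw [hset] at hrl
    simp only [Finset.mem_insert, Finset.mem_singleton] at hrl
    rcases hrl with rfl | rfl | rfl
    · exact hqr rfl
    · exact hfQ hrQ
    · exact hjjw (host_unique hQ hrj hjw)
  refine ⟨l, hrl, ?_, hli⟩
  -- suppose d_l = 2, derive contradiction
  by_contra hd3
  have hdl2 : (VSet Q ∩ tripleNodes (P l)).card = 2 := by
    have h1 := fact1 hk hP hQ hopt l
    have h2 := d_le3 (Q := Q) hP l
    omega
  obtain ⟨ql, fl, wl, hsetl, hqlfl, hqlwl, hflwl, hadjl, hqlQ, hwlQ, hflQ⟩ :=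
    sel_def hP hdl2
  -- r is one of the covered vertices of S_l; ow is the other, fl is free
  have hrSl : r ∈ ({ql, fl, wl} : Finset V) := hsetl ▸ hrl
  simp only [Finset.mem_insert, Finset.mem_singleton] at hrSl
  obtain ⟨ow, hsetl', hrfl, hrow, hflow, howQ⟩ :
      ∃ ow, tripleNodes (P l) = {r, fl, ow} ∧ r ≠ fl ∧ r ≠ ow ∧ fl ≠ ow ∧ ow ∈ VSet Q := by
    rcases hrSl with rfl | rfl | rfl
    · exact ⟨wl, hsetl, fun h => hflQ (h ▸ hrQ), hqlwl, hflwl, hwlQ⟩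
    · exact absurd hrQ hflQ
    · exact ⟨ql, hsetl.trans (triple_perm_rev ql fl r), fun h => hflQ (h ▸ hrQ),
        Ne.symm hqlwl, Ne.symm hqlfl, hqlQ⟩
  have howP : ow ∈ tripleNodes (P l) := by rw [hsetl']; simp
  have hrP : r ∈ tripleNodes (P l) := by rw [hsetl']; simp
  have hflP : fl ∈ tripleNodes (P l) := by rw [hsetl']; simp
  obtain ⟨jw', hjw'⟩ := mem_VSet.mp howQ
  obtain ⟨hl3, hla, hlb⟩ := hP.1 l
  rcases eq_or_ne jw' j with rfl | hjne
  · -- ow ∈ T_j, so ow = n : single swap T_j → P l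
    have hown : ow = n := by
      have : ow ∈ ({q, n, r} : Finset V) := hdec ▸ hjw'
      simp only [Finset.mem_insert, Finset.mem_singleton] at this
      rcases this with rfl | rfl | rfl
      · exact absurd hqP (mem_P_ne hP howP (hli))
      · rfl
      · exact absurd rfl hrow.symm
    subst hown
    have hdisj : ∀ j', j' ≠ jw' → Disjoint (tripleNodes (P l)) (tripleNodes (Q j')) := by
      intro j' hj'
      rw [hsetl', Finset.disjoint_left]
      intro u hu huj'
      simp only [Finset.mem_insert, Finset.mem_singleton] at hu
      rcases hu with rfl | rfl | rfl
      · exact hj' (host_unique hQ huj' hrj)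
      · exact hflQ (path_subset_VSet j' huj')
      · exact hj' (host_unique hQ huj' hnj)
    have hm := move1 hP hQ hopt (j0 := jw') hl3 hla hlb hdisj
    rw [tP_full hP l] at hm
    refine hm.2 (le_antisymm (t_le3 hQ jw') hm.1).symm l ?_ rfl (unreal_of_defP hP (by omega))
    exact unreal_of_defvertex hP hQ hqj hqP (by omega)
  · -- ow in a different path : double swap
    have hd12 : Disjoint (tripleNodes D1) (tripleNodes (P l)) := by
      rw [hD1set, Finset.disjoint_left]
      intro u hu hul
      simp only [Finset.mem_insert, Finset.mem_singleton] at hu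
      rcases hu with rfl | rfl | rfl
      · exact (mem_P_ne hP hfP (fun h => hli h.symm)) hul
      · exact (mem_P_ne hP hqP (fun h => hli h.symm)) hul
      · rw [hsetl'] at hul
        simp only [Finset.mem_insert, Finset.mem_singleton] at hul
        rcases hul with rfl | rfl | rfl
        · exact hnr rfl
        · exact hflQ hnQ
        · exact hjne (host_unique hQ hjw' hnj)
    have hdisj2 : ∀ j', j' ≠ j → j' ≠ jw' → Disjoint (tripleNodes (P l)) (tripleNodes (Q j')) := by
      intro j' hj1 hj2
      rw [hsetl', Finset.disjoint_left]
      intro u hu huj'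
      simp only [Finset.mem_insert, Finset.mem_singleton] at hu
      rcases hu with rfl | rfl | rfl
      · exact hj1 (host_unique hQ huj' hrj)
      · exact hflQ (path_subset_VSet j' huj')
      · exact hj2 (host_unique hQ huj' hjw')
    have hm := move2 hP hQ hopt (j1 := j) (j2 := jw') hjne.symm hD13 hD1a hD1b
      hl3 hla hlb hdisj1 hd12 hdisj2
    rw [tP_full hP l, htD1, htj, if_pos hrVP] at hm
    have htjw3 : (tripleNodes (Q jw') ∩ VSet P).card = 3 :=
      le_antisymm (t_le3 hQ jw') (by omega)
    refine hm.2 (by omega) l ?_ ?_ (Or.inr rfl) (unreal_of_defP hP (by omega))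
    · exact unreal_of_defvertex hP hQ hqj hqP (by omega)
    · exact unreal_of_defvertex hP hQ hjw' howP (by omega)

end Main5

section Main6
set_option linter.unusedSectionVars false
set_option maxHeartbeats 600000
open Finset
variable [DecidableEq V] [Fintype V]
variable {k : ℕ} {P : Fin (k - 1) → V × V × V} {Q : Fin k → V × V × V} {G : SimpleGraph V}

lemma triple_third {p : V × V × V} (h3 : (tripleNodes p).card = 3) {u v : V}
    (hu : u ∈ tripleNodes p) (hv : v ∈ tripleNodes p) (huv : u ≠ v) :
    ∃ z, tripleNodes p = {u, v, z} ∧ u ≠ z ∧ v ≠ z ∧ z ∈ tripleNodes p := by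
  obtain ⟨h12, h13, h23⟩ := triple_ne h3
  have e1 : p.1 ∈ tripleNodes p := by simp
  have e2 : p.2.1 ∈ tripleNodes p := by simp
  have e3 : p.2.2 ∈ tripleNodes p := by simp
  have hT : tripleNodes p = {p.1, p.2.1, p.2.2} := rfl
  rcases mem_tripleNodes.mp hu with h1 | h1 | h1 <;>
    rcases mem_tripleNodes.mp hv with h2 | h2 | h2 <;> subst h1 <;> subst h2
  · exact absurd rfl huv
  · exact ⟨p.2.2, rfl, h13, h23, e3⟩
  · exact ⟨p.2.1, by rw [hT]; ext x; simp; tauto, h12, h23.symm, e2⟩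
  · exact ⟨p.2.2, by rw [hT]; ext x; simp; tauto, h23, h13, e3⟩
  · exact absurd rfl huv
  · exact ⟨p.1, by rw [hT]; ext x; simp; tauto, h12.symm, h13.symm, e1⟩
  · exact ⟨p.2.1, by rw [hT]; ext x; simp; tauto, h23.symm, h12, e2⟩
  · exact ⟨p.1, by rw [hT]; ext x; simp; tauto, h13.symm, h12.symm, e1⟩
  · exact absurd rfl huv

lemma def_data (hk : 1 ≤ k) (hP : IsP2Packing G (k-1) P) (hQ : IsP2Packing G k Q)
    (hopt : ∀ Q', IsP2Packing G k Q' →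
      (3*k+1) * ccP P Q' + rrP P Q' ≤ (3*k+1) * ccP P Q + rrP P Q)
    {i : Fin (k-1)} (hd : (VSet Q ∩ tripleNodes (P i)).card = 2) :
    ∃ (q f w : V) (j : Fin k) (n r : V) (l : Fin (k-1)),
      tripleNodes (P i) = {q, f, w} ∧ q ≠ f ∧ q ≠ w ∧ f ≠ w ∧ G.Adj q f ∧
      w ∈ VSet Q ∧ f ∉ VSet Q ∧ q ∈ tripleNodes (Q j) ∧
      tripleNodes (Q j) = {q, n, r} ∧ q ≠ n ∧ q ≠ r ∧ n ≠ r ∧ G.Adj q n ∧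
      n ∈ tripleNodes (Q j) ∧ r ∈ tripleNodes (Q j) ∧
      r ∈ tripleNodes (P l) ∧ (VSet Q ∩ tripleNodes (P l)).card = 3 ∧ l ≠ i := by
  obtain ⟨q, f, w, hset, hqf, hqw, hfw, hadj, hqQ, hwQ, hfQ⟩ := sel_def hP hd
  obtain ⟨j, n, r, hdec, hqn, hqr, hnr, hadjn, hnj, hrj⟩ := host_dec hQ hqQ
  obtain ⟨l, hrl, hl3, hli⟩ :=
    rotLemma hk hP hQ hopt hset hqf hqw hfw hadj hwQ hfQ hd hdec hqn hqr hnr hadjn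
  exact ⟨q, f, w, j, n, r, l, hset, hqf, hqw, hfw, hadj, hwQ, hfQ,
    by rw [hdec]; simp, hdec, hqn, hqr, hnr, hadjn, hnj, hrj, hrl, hl3, hli⟩

lemma hosts_ne (hk : 1 ≤ k) (hP : IsP2Packing G (k-1) P) (hQ : IsP2Packing G k Q)
    (hopt : ∀ Q', IsP2Packing G k Q' →
      (3*k+1) * ccP P Q' + rrP P Q' ≤ (3*k+1) * ccP P Q + rrP P Q)
    {i1 i2 : Fin (k-1)} (hne : i1 ≠ i2)
    (hd1 : (VSet Q ∩ tripleNodes (P i1)).card = 2)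
    (hd2 : (VSet Q ∩ tripleNodes (P i2)).card = 2)
    {q1 f1 w1 q2 f2 w2 : V} {j1 j2 : Fin k}
    (hset1 : tripleNodes (P i1) = {q1, f1, w1})
    (hqf1 : q1 ≠ f1) (hqw1 : q1 ≠ w1) (hfw1 : f1 ≠ w1) (hadj1 : G.Adj q1 f1)
    (hw1Q : w1 ∈ VSet Q) (hf1Q : f1 ∉ VSet Q) (hq1j : q1 ∈ tripleNodes (Q j1))
    (hset2 : tripleNodes (P i2) = {q2, f2, w2})
    (hqf2 : q2 ≠ f2) (hqw2 : q2 ≠ w2) (hfw2 : f2 ≠ w2) (hadj2 : G.Adj q2 f2)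
    (hw2Q : w2 ∈ VSet Q) (hf2Q : f2 ∉ VSet Q) (hq2j : q2 ∈ tripleNodes (Q j2)) :
    j1 ≠ j2 := by
  rintro rfl
  have hq1P : q1 ∈ tripleNodes (P i1) := by rw [hset1]; simp
  have hq2P : q2 ∈ tripleNodes (P i2) := by rw [hset2]; simp
  have hq12 : q1 ≠ q2 := fun h => (mem_P_ne hP hq1P hne) (h ▸ hq2P)
  obtain ⟨n, hcase | hcase⟩ := host_dec_pair hQ hq1j hq2j hq12
  · obtain ⟨hdec, hadjn, hq1n, hnq2⟩ := hcase
    obtain ⟨l, hrl, hl3, _⟩ := rotLemma hk hP hQ hopt hset1 hqf1 hqw1 hfw1 hadj1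
      hw1Q hf1Q hd1 hdec hq1n hq12 hnq2 hadjn
    have : l = i2 := phost_unique hP hrl hq2P
    rw [this, hd2] at hl3
    omega
  · obtain ⟨hdec, hadjn, hq2n, hnq1⟩ := hcase
    obtain ⟨l, hrl, hl3, _⟩ := rotLemma hk hP hQ hopt hset2 hqf2 hqw2 hfw2 hadj2
      hw2Q hf2Q hd2 hdec hq2n hq12.symm hnq1 hadjn
    have : l = i1 := phost_unique hP hrl hq1P
    rw [this, hd1] at hl3
    omega

end Main6

section Main7
set_option linter.unusedSectionVars false
set_option maxHeartbeats 1000000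
open Finset
variable [DecidableEq V] [Fintype V]
variable {k : ℕ} {P : Fin (k - 1) → V × V × V} {Q : Fin k → V × V × V} {G : SimpleGraph V}

lemma psi_inj (hk : 1 ≤ k) (hP : IsP2Packing G (k-1) P) (hQ : IsP2Packing G k Q)
    (hopt : ∀ Q', IsP2Packing G k Q' →
      (3*k+1) * ccP P Q' + rrP P Q' ≤ (3*k+1) * ccP P Q + rrP P Q)
    {i1 i2 l : Fin (k-1)} (hne : i1 ≠ i2)
    (hd1 : (VSet Q ∩ tripleNodes (P i1)).card = 2)
    (hd2 : (VSet Q ∩ tripleNodes (P i2)).card = 2)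
    {q1 f1 w1 q2 f2 w2 n1 r1 n2 r2 : V} {j1 j2 : Fin k}
    (hset1 : tripleNodes (P i1) = {q1, f1, w1})
    (hqf1 : q1 ≠ f1) (hqw1 : q1 ≠ w1) (hfw1 : f1 ≠ w1) (hadj1 : G.Adj q1 f1)
    (hw1Q : w1 ∈ VSet Q) (hf1Q : f1 ∉ VSet Q) (hq1j : q1 ∈ tripleNodes (Q j1))
    (hdec1 : tripleNodes (Q j1) = {q1, n1, r1})
    (hqn1 : q1 ≠ n1) (hqr1 : q1 ≠ r1) (hnr1 : n1 ≠ r1) (hadjn1 : G.Adj q1 n1)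
    (hn1j : n1 ∈ tripleNodes (Q j1)) (hr1j : r1 ∈ tripleNodes (Q j1))
    (hr1l : r1 ∈ tripleNodes (P l)) (hli1 : l ≠ i1)
    (hset2 : tripleNodes (P i2) = {q2, f2, w2})
    (hqf2 : q2 ≠ f2) (hqw2 : q2 ≠ w2) (hfw2 : f2 ≠ w2) (hadj2 : G.Adj q2 f2)
    (hw2Q : w2 ∈ VSet Q) (hf2Q : f2 ∉ VSet Q) (hq2j : q2 ∈ tripleNodes (Q j2))
    (hdec2 : tripleNodes (Q j2) = {q2, n2, r2})
    (hqn2 : q2 ≠ n2) (hqr2 : q2 ≠ r2) (hnr2 : n2 ≠ r2) (hadjn2 : G.Adj q2 n2)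
    (hn2j : n2 ∈ tripleNodes (Q j2)) (hr2j : r2 ∈ tripleNodes (Q j2))
    (hr2l : r2 ∈ tripleNodes (P l)) (hli2 : l ≠ i2) : False := by
  have hj12 : j1 ≠ j2 := hosts_ne hk hP hQ hopt hne hd1 hd2 hset1 hqf1 hqw1 hfw1
    hadj1 hw1Q hf1Q hq1j hset2 hqf2 hqw2 hfw2 hadj2 hw2Q hf2Q hq2j
  have hq1P : q1 ∈ tripleNodes (P i1) := by rw [hset1]; simp
  have hf1P : f1 ∈ tripleNodes (P i1) := by rw [hset1]; simp
  have hq2P : q2 ∈ tripleNodes (P i2) := by rw [hset2]; simp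
  have hf2P : f2 ∈ tripleNodes (P i2) := by rw [hset2]; simp
  have hq1VP : q1 ∈ VSet P := path_subset_VSet i1 hq1P
  have hf1VP : f1 ∈ VSet P := path_subset_VSet i1 hf1P
  have hq2VP : q2 ∈ VSet P := path_subset_VSet i2 hq2P
  have hf2VP : f2 ∈ VSet P := path_subset_VSet i2 hf2P
  have hr1VP : r1 ∈ VSet P := path_subset_VSet l hr1l
  have hr2VP : r2 ∈ VSet P := path_subset_VSet l hr2l
  have hn1Q : n1 ∈ VSet Q := path_subset_VSet j1 hn1j
  have hn2Q : n2 ∈ VSet Q := path_subset_VSet j2 hn2j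
  have hq1Q : q1 ∈ VSet Q := path_subset_VSet j1 hq1j
  have hq2Q : q2 ∈ VSet Q := path_subset_VSet j2 hq2j
  have hr1Q : r1 ∈ VSet Q := path_subset_VSet j1 hr1j
  have hr2Q : r2 ∈ VSet Q := path_subset_VSet j2 hr2j
  have hfq1 : f1 ≠ q1 := hqf1.symm
  have hfn1 : f1 ≠ n1 := fun h => hf1Q (h ▸ hn1Q)
  have hfq2 : f2 ≠ q2 := hqf2.symm
  have hfn2 : f2 ≠ n2 := fun h => hf2Q (h ▸ hn2Q)
  have hr12 : r1 ≠ r2 := fun h => hj12 (host_unique hQ hr1j (h ▸ hr2j))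
  obtain ⟨r3, hsetl, hr1r3, hr2r3, hr3l⟩ := triple_third (hP.1 l).1 hr1l hr2l hr12
  -- rotation triples
  have hD1set : tripleNodes ((f1, q1, n1) : V × V × V) = {f1, q1, n1} := rfl
  have hD13 : (tripleNodes ((f1, q1, n1) : V × V × V)).card = 3 :=
    card_triple_eq_three hfq1 hfn1 hqn1
  have hD2set : tripleNodes ((f2, q2, n2) : V × V × V) = {f2, q2, n2} := rfl
  have hD23 : (tripleNodes ((f2, q2, n2) : V × V × V)).card = 3 :=
    card_triple_eq_three hfq2 hfn2 hqn2
  have hdisjD1 : ∀ j, j ≠ j1 →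
      Disjoint (tripleNodes ((f1, q1, n1) : V × V × V)) (tripleNodes (Q j)) := by
    intro j hj
    rw [hD1set, Finset.disjoint_left]
    intro u hu huj
    simp only [Finset.mem_insert, Finset.mem_singleton] at hu
    rcases hu with rfl | rfl | rfl
    · exact hf1Q (path_subset_VSet j huj)
    · exact hj (host_unique hQ huj hq1j)
    · exact hj (host_unique hQ huj hn1j)
  have hdisjD2 : ∀ j, j ≠ j2 →
      Disjoint (tripleNodes ((f2, q2, n2) : V × V × V)) (tripleNodes (Q j)) := by
    intro j hj
    rw [hD2set, Finset.disjoint_left]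
    intro u hu huj
    simp only [Finset.mem_insert, Finset.mem_singleton] at hu
    rcases hu with rfl | rfl | rfl
    · exact hf2Q (path_subset_VSet j huj)
    · exact hj (host_unique hQ huj hq2j)
    · exact hj (host_unique hQ huj hn2j)
  -- t-value identities
  have htD1 : (tripleNodes ((f1, q1, n1) : V × V × V) ∩ VSet P).card
      = 1 + 1 + (if n1 ∈ VSet P then 1 else 0) := by
    rw [hD1set, card_triple_inter hfq1 hfn1 hqn1, if_pos hf1VP, if_pos hq1VP]
  have htD2 : (tripleNodes ((f2, q2, n2) : V × V × V) ∩ VSet P).card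
      = 1 + 1 + (if n2 ∈ VSet P then 1 else 0) := by
    rw [hD2set, card_triple_inter hfq2 hfn2 hqn2, if_pos hf2VP, if_pos hq2VP]
  have htj1 : (tripleNodes (Q j1) ∩ VSet P).card
      = 1 + (if n1 ∈ VSet P then 1 else 0) + 1 := by
    rw [hdec1, card_triple_inter hqn1 hqr1 hnr1, if_pos hq1VP, if_pos hr1VP]
  have htj2 : (tripleNodes (Q j2) ∩ VSet P).card
      = 1 + (if n2 ∈ VSet P then 1 else 0) + 1 := by
    rw [hdec2, card_triple_inter hqn2 hqr2 hnr2, if_pos hq2VP, if_pos hr2VP]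
  have hn1b : (if n1 ∈ VSet P then 1 else 0) ≤ 1 := by
    by_cases h : n1 ∈ VSet P <;> simp [h]
  have hn2b : (if n2 ∈ VSet P then 1 else 0) ≤ 1 := by
    by_cases h : n2 ∈ VSet P <;> simp [h]
  -- unrealized facts
  have hrm1 : ∀ m, tripleNodes (Q j1) ≠ tripleNodes (P m) :=
    unreal_of_defvertex hP hQ hq1j hq1P (by omega)
  have hrm2 : ∀ m, tripleNodes (Q j2) ≠ tripleNodes (P m) :=
    unreal_of_defvertex hP hQ hq2j hq2P (by omega)
  have hq1nl : q1 ∉ tripleNodes (P l) := mem_P_ne hP hq1P (Ne.symm hli1)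
  have hf1nl : f1 ∉ tripleNodes (P l) := mem_P_ne hP hf1P (Ne.symm hli1)
  have hq2nl : q2 ∉ tripleNodes (P l) := mem_P_ne hP hq2P (Ne.symm hli2)
  have hf2nl : f2 ∉ tripleNodes (P l) := mem_P_ne hP hf2P (Ne.symm hli2)
  have hlold : ∀ j, tripleNodes (Q j) ≠ tripleNodes (P l) := by
    intro j he
    have : r1 ∈ tripleNodes (Q j) := he ▸ hr1l
    have hjj1 : j = j1 := host_unique hQ this hr1j
    subst hjj1
    exact hq1nl (he ▸ hq1j)
  have hl3 := hP.1 l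
  have hmemr : ∀ x ∈ tripleNodes (P l), x = r1 ∨ x = r2 ∨ x = r3 := by
    intro x hx
    rw [hsetl] at hx
    simpa using hx
  by_cases hr3Q : r3 ∈ VSet Q
  · obtain ⟨j3, hr3j⟩ := mem_VSet.mp hr3Q
    by_cases h31 : j3 = j1
    · -- case (i) : r3 ∈ T_{j1} ; swap (j2 ↦ rot2, j1 ↦ P l)
      rw [h31] at hr3j
      have hd12 : Disjoint (tripleNodes ((f2, q2, n2) : V × V × V)) (tripleNodes (P l)) := by
        rw [hD2set, Finset.disjoint_left]
        intro u hu hul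
        simp only [Finset.mem_insert, Finset.mem_singleton] at hu
        rcases hu with rfl | rfl | rfl
        · exact hf2nl hul
        · exact hq2nl hul
        · rcases hmemr _ hul with rfl | rfl | rfl
          · exact hj12 (host_unique hQ hr1j hn2j)
          · exact hnr2 rfl
          · exact hj12 (host_unique hQ hr3j hn2j)
      have hdisj2 : ∀ j, j ≠ j2 → j ≠ j1 →
          Disjoint (tripleNodes (P l)) (tripleNodes (Q j)) := by
        intro j hja hjb
        rw [Finset.disjoint_left]
        intro u hu huj
        rcases hmemr _ hu with rfl | rfl | rfl
        · exact hjb (host_unique hQ huj hr1j)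
        · exact hja (host_unique hQ huj hr2j)
        · exact hjb (host_unique hQ huj hr3j)
      have hm := move2 hP hQ hopt (j1 := j2) (j2 := j1) (Ne.symm hj12) hD23
        hadj2.symm hadjn2 hl3.1 hl3.2.1 hl3.2.2 hdisjD2 hd12 hdisj2
      rw [htD2, htj2, tP_full hP l, htj1] at hm
      refine hm.2 (by omega) l hrm2 hrm1 (Or.inr rfl) hlold
    · by_cases h32 : j3 = j2
      · -- case (ii) : r3 ∈ T_{j2} ; swap (j1 ↦ rot1, j2 ↦ P l)
        rw [h32] at hr3j
        have hd12 : Disjoint (tripleNodes ((f1, q1, n1) : V × V × V)) (tripleNodes (P l)) := by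
          rw [hD1set, Finset.disjoint_left]
          intro u hu hul
          simp only [Finset.mem_insert, Finset.mem_singleton] at hu
          rcases hu with rfl | rfl | rfl
          · exact hf1nl hul
          · exact hq1nl hul
          · rcases hmemr _ hul with rfl | rfl | rfl
            · exact hnr1 rfl
            · exact hj12 (host_unique hQ hn1j hr2j)
            · exact hj12 (host_unique hQ hn1j hr3j)
        have hdisj2 : ∀ j, j ≠ j1 → j ≠ j2 →
            Disjoint (tripleNodes (P l)) (tripleNodes (Q j)) := by
          intro j hja hjb
          rw [Finset.disjoint_left]
          intro u hu huj
          rcases hmemr _ hu with rfl | rfl | rfl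
          · exact hja (host_unique hQ huj hr1j)
          · exact hjb (host_unique hQ huj hr2j)
          · exact hjb (host_unique hQ huj hr3j)
        have hm := move2 hP hQ hopt (j1 := j1) (j2 := j2) hj12 hD13
          hadj1.symm hadjn1 hl3.1 hl3.2.1 hl3.2.2 hdisjD1 hd12 hdisj2
        rw [htD1, htj1, tP_full hP l, htj2] at hm
        refine hm.2 (by omega) l hrm1 hrm2 (Or.inr rfl) hlold
      · -- case (iii) : r3 in a third path ; triple swap
        have hj13 : j1 ≠ j3 := fun h => h31 h.symm
        have hj23 : j2 ≠ j3 := fun h => h32 h.symm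
        have hd12 : Disjoint (tripleNodes ((f1, q1, n1) : V × V × V))
            (tripleNodes ((f2, q2, n2) : V × V × V)) := by
          rw [hD1set, hD2set, Finset.disjoint_left]
          intro u hu hu2
          simp only [Finset.mem_insert, Finset.mem_singleton] at hu hu2
          rcases hu with rfl | rfl | rfl <;> rcases hu2 with rfl | rfl | rfl
          · exact (mem_P_ne hP hf1P hne) hf2P
          · exact hf1Q hq2Q
          · exact hf1Q hn2Q
          · exact hf2Q hq1Q
          · exact hj12 (host_unique hQ hq1j hq2j)
          · exact hj12 (host_unique hQ hq1j hn2j)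
          · exact hf2Q hn1Q
          · exact hj12 (host_unique hQ hn1j hq2j)
          · exact hj12 (host_unique hQ hn1j hn2j)
        have hd13 : Disjoint (tripleNodes ((f1, q1, n1) : V × V × V)) (tripleNodes (P l)) := by
          rw [hD1set, Finset.disjoint_left]
          intro u hu hul
          simp only [Finset.mem_insert, Finset.mem_singleton] at hu
          rcases hu with rfl | rfl | rfl
          · exact hf1nl hul
          · exact hq1nl hul
          · rcases hmemr _ hul with rfl | rfl | rfl
            · exact hnr1 rfl
            · exact hj12 (host_unique hQ hn1j hr2j)
            · exact hj13 (host_unique hQ hn1j hr3j)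
        have hd23 : Disjoint (tripleNodes ((f2, q2, n2) : V × V × V)) (tripleNodes (P l)) := by
          rw [hD2set, Finset.disjoint_left]
          intro u hu hul
          simp only [Finset.mem_insert, Finset.mem_singleton] at hu
          rcases hu with rfl | rfl | rfl
          · exact hf2nl hul
          · exact hq2nl hul
          · rcases hmemr _ hul with rfl | rfl | rfl
            · exact hj12 (host_unique hQ hr1j hn2j)
            · exact hnr2 rfl
            · exact hj23 (host_unique hQ hn2j hr3j)
        have hdisj3 : ∀ j, j ≠ j1 → j ≠ j2 → j ≠ j3 →
            Disjoint (tripleNodes (P l)) (tripleNodes (Q j)) := by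
          intro j hja hjb hjc
          rw [Finset.disjoint_left]
          intro u hu huj
          rcases hmemr _ hu with rfl | rfl | rfl
          · exact hja (host_unique hQ huj hr1j)
          · exact hjb (host_unique hQ huj hr2j)
          · exact hjc (host_unique hQ huj hr3j)
        have hrm3 : ∀ m, tripleNodes (Q j3) ≠ tripleNodes (P m) := by
          intro m he
          have h1 : r3 ∈ tripleNodes (P m) := he ▸ hr3j
          have h2 : m = l := phost_unique hP h1 hr3l
          subst h2
          exact hj13 (host_unique hQ (he ▸ hr1l) hr1j).symm
        have hm := move3 hP hQ hopt hj12 hj13 hj23 hD13 hadj1.symm hadjn1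
          hD23 hadj2.symm hadjn2 hl3.1 hl3.2.1 hl3.2.2
          hdisjD1 hd12 (fun j _ hjb => hdisjD2 j hjb)
          hd13 hd23 hdisj3
        rw [htD1, htj1, htD2, htj2, tP_full hP l] at hm
        have := t_le3 (P := P) hQ j3
        refine hm.2 (by omega) l hrm1 hrm2 hrm3 rfl hlold
  · -- r3 not covered : swap (j1 ↦ rot1, j2 ↦ P l)
    have hd12 : Disjoint (tripleNodes ((f1, q1, n1) : V × V × V)) (tripleNodes (P l)) := by
      rw [hD1set, Finset.disjoint_left]
      intro u hu hul
      simp only [Finset.mem_insert, Finset.mem_singleton] at hu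
      rcases hu with rfl | rfl | rfl
      · exact hf1nl hul
      · exact hq1nl hul
      · rcases hmemr _ hul with rfl | rfl | rfl
        · exact hnr1 rfl
        · exact hj12 (host_unique hQ hn1j hr2j)
        · exact hr3Q hn1Q
    have hdisj2 : ∀ j, j ≠ j1 → j ≠ j2 →
        Disjoint (tripleNodes (P l)) (tripleNodes (Q j)) := by
      intro j hja hjb
      rw [Finset.disjoint_left]
      intro u hu huj
      rcases hmemr _ hu with rfl | rfl | rfl
      · exact hja (host_unique hQ huj hr1j)
      · exact hjb (host_unique hQ huj hr2j)
      · exact hr3Q (path_subset_VSet j huj)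
    have hm := move2 hP hQ hopt (j1 := j1) (j2 := j2) hj12 hD13
      hadj1.symm hadjn1 hl3.1 hl3.2.1 hl3.2.2 hdisjD1 hd12 hdisj2
    rw [htD1, htj1, tP_full hP l, htj2] at hm
    refine hm.2 (by omega) l hrm1 hrm2 (Or.inr rfl) hlold

end Main7

set_option maxHeartbeats 1000000 in
theorem stmt12 [DecidableEq V] [Fintype V] (G : SimpleGraph V) (k : ℕ) (hk : 1 ≤ k)
    (hpack : ∃ Q : Fin k → V × V × V, IsP2Packing G k Q)
    (P : Fin (k - 1) → V × V × V) (hP : IsP2Packing G (k - 1) P) :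
    ∃ Q : Fin k → V × V × V, IsP2Packing G k Q ∧
      (5 * (k - 1) + 1) / 2 ≤
        ((Finset.univ.biUnion fun i => tripleNodes (Q i)) ∩
          (Finset.univ.biUnion fun i => tripleNodes (P i))).card := by
  classical
  obtain ⟨Q0, hQ0⟩ := hpack
  set S : Finset (Fin k → V × V × V) :=
    Finset.univ.filter (fun Q => IsP2Packing G k Q) with hSdef
  have hne : S.Nonempty := ⟨Q0, by simp [hSdef, hQ0]⟩
  obtain ⟨Q, hQS, hQmax⟩ :=
    Finset.exists_max_image S (fun Q => (3*k+1) * ccP P Q + rrP P Q) hne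
  have hQ : IsP2Packing G k Q := by
    have := hQS; rw [hSdef] at this; simpa using this
  have hopt : ∀ Q', IsP2Packing G k Q' →
      (3*k+1) * ccP P Q' + rrP P Q' ≤ (3*k+1) * ccP P Q + rrP P Q := by
    intro Q' hQ'
    exact hQmax Q' (by rw [hSdef]; simpa using hQ')
  refine ⟨Q, hQ, ?_⟩
  show (5 * (k - 1) + 1) / 2 ≤ ccP P Q
  -- every P-path has 2 or 3 covered vertices
  have hd23 : ∀ i, (VSet Q ∩ tripleNodes (P i)).card = 2 ∨
      (VSet Q ∩ tripleNodes (P i)).card = 3 := by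
    intro i
    have h1 := fact1 hk hP hQ hopt i
    have h2 := d_le3 (Q := Q) hP i
    omega
  -- choice of data for deficient paths
  have hdd : ∀ i : Fin (k-1), ∃ (q f w : V) (j : Fin k) (n r : V) (l : Fin (k-1)),
      (VSet Q ∩ tripleNodes (P i)).card = 2 →
      (tripleNodes (P i) = {q, f, w} ∧ q ≠ f ∧ q ≠ w ∧ f ≠ w ∧ G.Adj q f ∧
       w ∈ VSet Q ∧ f ∉ VSet Q ∧ q ∈ tripleNodes (Q j) ∧
       tripleNodes (Q j) = {q, n, r} ∧ q ≠ n ∧ q ≠ r ∧ n ≠ r ∧ G.Adj q n ∧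
       n ∈ tripleNodes (Q j) ∧ r ∈ tripleNodes (Q j) ∧
       r ∈ tripleNodes (P l) ∧ (VSet Q ∩ tripleNodes (P l)).card = 3 ∧ l ≠ i) := by
    intro i
    by_cases hd : (VSet Q ∩ tripleNodes (P i)).card = 2
    · obtain ⟨q, f, w, j, n, r, l, hh⟩ := def_data hk hP hQ hopt hd
      exact ⟨q, f, w, j, n, r, l, fun _ => hh⟩
    · exact ⟨(P i).1, (P i).1, (P i).1, ⟨0, hk⟩, (P i).1, (P i).1, i,
        fun h => absurd h hd⟩
  choose qf ff wf jf nf rf ψ hprop using hdd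
  -- ψ is injective on deficient indices and lands in full indices
  set A : Finset (Fin (k-1)) :=
    Finset.univ.filter (fun i => (VSet Q ∩ tripleNodes (P i)).card = 2) with hAdef
  set B : Finset (Fin (k-1)) :=
    Finset.univ.filter (fun i => (VSet Q ∩ tripleNodes (P i)).card = 3) with hBdef
  have hmaps : ∀ i ∈ A, ψ i ∈ B := by
    intro i hi
    rw [hAdef, Finset.mem_filter] at hi
    obtain ⟨_, _, _, _, _, _, _, _, _, _, _, _, _, _, _, _, hl3, _⟩ := hprop i hi.2
    rw [hBdef, Finset.mem_filter]
    exact ⟨Finset.mem_univ _, hl3⟩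
  have hinj : ∀ i1 ∈ A, ∀ i2 ∈ A, ψ i1 = ψ i2 → i1 = i2 := by
    intro i1 hi1 i2 hi2 hpsi
    by_contra hne
    rw [hAdef, Finset.mem_filter] at hi1 hi2
    obtain ⟨hset1, hqf1, hqw1, hfw1, hadj1, hw1Q, hf1Q, hq1j, hdec1, hqn1, hqr1,
      hnr1, hadjn1, hn1j, hr1j, hr1l, hl31, hli1⟩ := hprop i1 hi1.2
    obtain ⟨hset2, hqf2, hqw2, hfw2, hadj2, hw2Q, hf2Q, hq2j, hdec2, hqn2, hqr2,
      hnr2, hadjn2, hn2j, hr2j, hr2l, hl32, hli2⟩ := hprop i2 hi2.2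
    rw [hpsi] at hr1l hli1
    exact psi_inj hk hP hQ hopt hne hi1.2 hi2.2 hset1 hqf1 hqw1 hfw1 hadj1 hw1Q
      hf1Q hq1j hdec1 hqn1 hqr1 hnr1 hadjn1 hn1j hr1j hr1l hli1 hset2 hqf2 hqw2
      hfw2 hadj2 hw2Q hf2Q hq2j hdec2 hqn2 hqr2 hnr2 hadjn2 hn2j hr2j hr2l hli2
  have hcard : A.card ≤ B.card := Finset.card_le_card_of_injOn ψ hmaps hinj
  -- counting
  have hsplit : A.card + B.card = k - 1 := by
    have h1 := Finset.card_filter_add_card_filter_not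
      (s := (Finset.univ : Finset (Fin (k-1))))
      (p := fun i => (VSet Q ∩ tripleNodes (P i)).card = 2)
    have h2 : Finset.univ.filter
        (fun i => ¬ (VSet Q ∩ tripleNodes (P i)).card = 2) = B := by
      rw [hBdef]
      apply Finset.filter_congr
      intro i _
      rcases hd23 i with h | h <;> simp [h]
    rw [h2] at h1
    rw [hAdef]
    simpa using h1
  have hccsum : ccP P Q = 2 * A.card + 3 * B.card := by
    rw [ccP_eq_sum' (Q := Q) hP]
    have h1 := Finset.sum_filter_add_sum_filter_not (Finset.univ : Finset (Fin (k-1)))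
      (fun i => (VSet Q ∩ tripleNodes (P i)).card = 2)
      (fun i => (VSet Q ∩ tripleNodes (P i)).card)
    have h2 : Finset.univ.filter
        (fun i => ¬ (VSet Q ∩ tripleNodes (P i)).card = 2) = B := by
      rw [hBdef]
      apply Finset.filter_congr
      intro i _
      rcases hd23 i with h | h <;> simp [h]
    rw [h2] at h1
    have hA2 : ∀ i ∈ A, (VSet Q ∩ tripleNodes (P i)).card = 2 := by
      intro i hi; rw [hAdef, Finset.mem_filter] at hi; exact hi.2
    have hB3 : ∀ i ∈ B, (VSet Q ∩ tripleNodes (P i)).card = 3 := by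
      intro i hi; rw [hBdef, Finset.mem_filter] at hi; exact hi.2
    have h3 : ∑ i ∈ A, (VSet Q ∩ tripleNodes (P i)).card = 2 * A.card := by
      rw [Finset.sum_congr rfl hA2, Finset.sum_const]; ring
    have h4 : ∑ i ∈ B, (VSet Q ∩ tripleNodes (P i)).card = 3 * B.card := by
      rw [Finset.sum_congr rfl hB3, Finset.sum_const]; ring
    rw [hAdef] at h3
    rw [← h1, h3, h4]
  omega
end
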